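/- arXiv:2503.14474 — 4 statements merged into one kernel-verified Lean document; each statement's English description precedes it below -/
import Mathlib

section
/- Let r ≥ 2, let 1 ≤ k ≤ ⌊r/2⌋, let (x_1,…,x_r) ∈ X_{r,k}, set x_0 = 0, and let [0,I] be the initial segment. If I ≤ k − 1, then every segment has length at most I + 1. -/
open Finset

/-- A finite hypergraph: a finite vertex set (of naturals) together with a
finite set of edges, each edge being a subset of the vertex set. -/
structure FinHypergraph where
  verts : Finset ℕ
  edges : Finset (Finset ℕ)
  edge_sub : ∀ e ∈ edges, e ⊆ verts

namespace FinHypergraph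

/-- `H` is `r`-uniform if every edge has exactly `r` vertices. -/
def IsUniform (r : ℕ) (H : FinHypergraph) : Prop := ∀ e ∈ H.edges, e.card = r

/-- `H` contains a copy of `F` (i.e. `F` is a subgraph of `H` after an injective
relabelling of the vertices of `F`). -/
def ContainsCopy (F H : FinHypergraph) : Prop :=
  ∃ f : ℕ → ℕ, Set.InjOn f ↑F.verts ∧ (∀ v ∈ F.verts, f v ∈ H.verts) ∧
    ∀ e ∈ F.edges, e.image f ∈ H.edges

/-- `H` is `𝓕`-free: it contains no member of `𝓕` as a subgraph. -/
def Free (𝓕 : Set FinHypergraph) (H : FinHypergraph) : Prop := ∀ F ∈ 𝓕, ¬ F.ContainsCopy H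

/-- `f` is a homomorphism from `F` to `H`: the image of every edge of `F` is an
edge of `H`. -/
def IsHom (f : ℕ → ℕ) (F H : FinHypergraph) : Prop :=
  (∀ v ∈ F.verts, f v ∈ H.verts) ∧ ∀ e ∈ F.edges, e.image f ∈ H.edges

/-- `H` is `𝓕`-hom-free: no member of `𝓕` admits a homomorphism to `H`. -/
def HomFree (𝓕 : Set FinHypergraph) (H : FinHypergraph) : Prop :=
  ∀ F ∈ 𝓕, ∀ f : ℕ → ℕ, ¬ IsHom f F H

/-- The degree of a vertex: the number of edges containing it. -/
def degree (H : FinHypergraph) (v : ℕ) : ℕ := (H.edges.filter (fun e => v ∈ e)).card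

/-- `H` is `r`-partite: the vertices can be coloured with `r` colours so that every
edge contains exactly one vertex of each colour. -/
def Partite (r : ℕ) (H : FinHypergraph) : Prop :=
  ∃ f : ℕ → Fin r, ∀ e ∈ H.edges, ∀ c : Fin r, (e.filter (fun v => f v = c)).card = 1

/-- `H` and `G` are isomorphic hypergraphs. -/
def Isomorphic (H G : FinHypergraph) : Prop :=
  ∃ f : ℕ → ℕ, Set.BijOn f ↑H.verts ↑G.verts ∧ H.edges.image (Finset.image f) = G.edges

end FinHypergraph

/-- The Turán number `ex(n, 𝓕)`: the maximum number of edges in an `𝓕`-free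
`r`-uniform hypergraph on `n` vertices. -/
noncomputable def exNum (r n : ℕ) (𝓕 : Set FinHypergraph) : ℕ :=
  sSup {m : ℕ | ∃ H : FinHypergraph, H.verts = Finset.range n ∧ H.IsUniform r ∧
    H.Free 𝓕 ∧ H.edges.card = m}

/-- The Turán density `π(𝓕) = lim_{n → ∞} ex(n, 𝓕) / (n choose r)`. -/
noncomputable def turanDensity (r : ℕ) (𝓕 : Set FinHypergraph) : ℝ :=
  Filter.lim (Filter.map (fun n : ℕ => (exNum r n 𝓕 : ℝ) / (n.choose r : ℝ)) Filter.atTop)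

/-- The three edges of the `(r-i,i)`-tent on vertex set `{1, …, 2r-1}`. -/
def tentEdges (r i : ℕ) : Finset (Finset ℕ) :=
  {Finset.Icc 1 r,
   Finset.Icc 1 i ∪ Finset.Icc (r + 1) (2 * r - i - 1) ∪ {2 * r - 1},
   Finset.Icc (i + 1) r ∪ Finset.Icc (2 * r - i) (2 * r - 1)}

/-- The `(r-i,i)`-tent `Δ_{(r-i,i)}`. -/
def tent (r i : ℕ) : FinHypergraph where
  verts := Finset.Icc 1 (2 * r - 1) ∪ (tentEdges r i).biUnion id
  edges := tentEdges r i
  edge_sub := fun e he =>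
    (Finset.subset_biUnion_of_mem id he).trans Finset.subset_union_right

/-- The family `𝓕_{r,k} = {Δ_{(r-i,i)} : 1 ≤ i ≤ k}`. -/
def tentFamily (r k : ℕ) : Set FinHypergraph := {H | ∃ i, 1 ≤ i ∧ i ≤ k ∧ H = tent r i}

/-- The Lagrangian of a hypergraph: the maximum of `∑_{e ∈ E} ∏_{v ∈ e} w v` over
nonnegative vertex weightings summing to `1`. -/
noncomputable def lagrangian (H : FinHypergraph) : ℝ :=
  sSup {s : ℝ | ∃ w : ℕ → ℝ, (∀ v, 0 ≤ w v) ∧ (∑ v ∈ H.verts, w v) = 1 ∧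
    s = ∑ e ∈ H.edges, ∏ v ∈ e, w v}

/-- The blowup density `b(H) = r! · L(H)`. -/
noncomputable def blowupDensity (r : ℕ) (H : FinHypergraph) : ℝ :=
  (r.factorial : ℝ) * lagrangian H

/-- Membership in the set `X_{r,k}`: `0 < x 1 ≤ x 2 ≤ ⋯ ≤ x r = 1`, and
`x i + x j ≤ x (i+j)` whenever `1 ≤ i ≤ k` and `i ≤ j ≤ r - i`. -/
def memX (r k : ℕ) (x : ℕ → ℝ) : Prop :=
  0 < x 1 ∧ (∀ i, 1 ≤ i → i < r → x i ≤ x (i + 1)) ∧ x r = 1 ∧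
    ∀ i j, 1 ≤ i → i ≤ k → i ≤ j → i + j ≤ r → x i + x j ≤ x (i + j)

/-- The interval `[L, R]` is uniform for `x`: `x i = x L + (i - L) * x 1` on it. -/
def UniformIntv (x : ℕ → ℝ) (L R : ℕ) : Prop :=
  ∀ i, L ≤ i → i ≤ R → x i = x L + ((i - L : ℕ) : ℝ) * x 1

/-- `[L, R]` is a segment: a uniform interval (inside `[0, r]`) that is not properly
contained in any other uniform interval. -/
def IsSegment (r : ℕ) (x : ℕ → ℝ) (L R : ℕ) : Prop :=
  L ≤ R ∧ R ≤ r ∧ UniformIntv x L R ∧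
    ∀ L' R', L' ≤ L → R ≤ R' → R' ≤ r → UniformIntv x L' R' → L' = L ∧ R' = R

/-- Shannon entropy (base 2) of a finitely supported distribution `p` on `s`. -/
noncomputable def ent {α : Type*} (s : Finset α) (p : α → ℝ) : ℝ :=
  ∑ a ∈ s, -(p a * Real.logb 2 (p a))

/-- Entropy of the pushforward of `p` along `g` (the entropy of `g(X)`). -/
noncomputable def pushEnt {α β : Type*} [DecidableEq β] (s : Finset α) (p : α → ℝ)
    (g : α → β) : ℝ :=
  ent (s.image g) (fun b => ∑ a ∈ s.filter (fun a => g a = b), p a)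

/-- All tuples in `V(H)^r`. -/
def tupleSpace (r : ℕ) (H : FinHypergraph) : Finset (Fin r → ℕ) :=
  Fintype.piFinset fun _ : Fin r => H.verts

/-- The joint entropy `H(X_1, …, X_r)` of a random tuple with distribution `p`. -/
noncomputable def jointEnt (r : ℕ) (H : FinHypergraph) (p : (Fin r → ℕ) → ℝ) : ℝ :=
  ent (tupleSpace r H) p

/-- The entropy `H(X_i, X_{i+1}, …, X_r)` of the suffix starting at position `i`
(1-indexed) of a random tuple with distribution `p`. -/
noncomputable def suffixEnt (r : ℕ) (H : FinHypergraph) (p : (Fin r → ℕ) → ℝ) (i : ℕ) : ℝ :=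
  pushEnt (tupleSpace r H) p (fun t (j : Fin r) => if i - 1 ≤ (j : ℕ) then t j else 0)

/-- The entropy `H(X_{j+1})` of the single coordinate `j` (0-indexed). -/
noncomputable def coordEnt (r : ℕ) (H : FinHypergraph) (p : (Fin r → ℕ) → ℝ) (j : Fin r) : ℝ :=
  pushEnt (tupleSpace r H) p (fun t => t j)

/-- `p` is the distribution of a random edge with uniform ordering on `H`:
nonnegative, total mass one, supported on tuples whose value set is an edge, and
exchangeable (invariant under permutations of the coordinates). -/
def IsRandomEdge (r : ℕ) (H : FinHypergraph) (p : (Fin r → ℕ) → ℝ) : Prop :=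
  (∀ t, 0 ≤ p t) ∧
  (∑ t ∈ tupleSpace r H, p t = 1) ∧
  (∀ t, p t ≠ 0 → Finset.image t Finset.univ ∈ H.edges) ∧
  (∀ σ : Equiv.Perm (Fin r), ∀ t, p (t ∘ σ) = p t)

/-- Every pair of distinct vertices lies in a common edge. -/
def TwoCovered (H : FinHypergraph) : Prop :=
  ∀ u ∈ H.verts, ∀ v ∈ H.verts, u ≠ v → ∃ e ∈ H.edges, u ∈ e ∧ v ∈ e

/-- `G` is a blowup of `G0`. -/
def IsBlowup (G0 G : FinHypergraph) : Prop :=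
  ∃ B : ℕ → Finset ℕ,
    (∀ v ∈ G0.verts, (B v).Nonempty) ∧
    (∀ u ∈ G0.verts, ∀ v ∈ G0.verts, u ≠ v → Disjoint (B u) (B v)) ∧
    G.verts = G0.verts.biUnion B ∧
    ∀ e : Finset ℕ, e ∈ G.edges ↔
      ∃ e0 ∈ G0.edges, e ⊆ e0.biUnion B ∧ ∀ v ∈ e0, (e ∩ B v).card = 1

/-- `G` is symmetrised: a blowup of a 2-covered `r`-uniform hypergraph. -/
def Symmetrised (r : ℕ) (G : FinHypergraph) : Prop :=
  ∃ G0 : FinHypergraph, G0.IsUniform r ∧ TwoCovered G0 ∧ IsBlowup G0 G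

/-- The family `𝓣_{r,k}` of `r`-uniform hypergraphs with exactly three edges
`A, B, C` such that `A ⊆ B ∪ C`, `(B ∩ C) \ A ≠ ∅` and `|A ∩ B| ≥ r - k`. -/
def TFamily (r k : ℕ) : Set FinHypergraph :=
  {H | H.IsUniform r ∧ ∃ A B C : Finset ℕ,
    H.verts = A ∪ B ∪ C ∧ H.edges = {A, B, C} ∧
    A ≠ B ∧ A ≠ C ∧ B ≠ C ∧
    A ⊆ B ∪ C ∧ ((B ∩ C) \ A).Nonempty ∧ r - k ≤ (A ∩ B).card}

/-- `H` is `Lset`-intersecting: any two distinct edges intersect in a number of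
vertices belonging to `Lset`. -/
def LIntersecting (Lset : Set ℕ) (H : FinHypergraph) : Prop :=
  ∀ e ∈ H.edges, ∀ e' ∈ H.edges, e ≠ e' → (e ∩ e').card ∈ Lset

/-- `H` is a `λ`-tent for the partition `lam = (λ_1, …, λ_m)` of `r`: it has
`m + 1` edges `e 0, e 1, …, e m`, each of size `r`, with `|e 0 ∩ e i| = λ_i`,
the sets `e 0 ∩ e 1, …, e 0 ∩ e m` partitioning `e 0`, and a vertex `v` with
`e i ∩ e j = {v}` for all `1 ≤ i < j ≤ m`. -/
def IsGeneralTent (r : ℕ) (lam : List ℕ) (H : FinHypergraph) : Prop :=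
  ∃ e : ℕ → Finset ℕ,
    H.verts = (Finset.range (lam.length + 1)).biUnion e ∧
    H.edges = (Finset.range (lam.length + 1)).image e ∧
    H.edges.card = lam.length + 1 ∧
    (∀ i ∈ Finset.range (lam.length + 1), (e i).card = r) ∧
    (∀ i, 1 ≤ i → i ≤ lam.length → (e 0 ∩ e i).card = lam.getD (i - 1) 0) ∧
    e 0 = (Finset.Icc 1 lam.length).biUnion (fun i => e 0 ∩ e i) ∧
    (∀ i j, 1 ≤ i → i < j → j ≤ lam.length → Disjoint (e 0 ∩ e i) (e 0 ∩ e j)) ∧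
    (∃ v : ℕ, ∀ i j, 1 ≤ i → i < j → j ≤ lam.length → e i ∩ e j = {v})

/-- The balanced complete `r`-partite `r`-uniform hypergraph `T^r(n)` on the vertex
set `{0, …, n-1}`, with parts given by residues modulo `r`: the edges are exactly
the `r`-subsets whose vertices have pairwise distinct residues mod `r`, i.e. those
meeting each part in exactly one vertex. -/
def turanGraph (r n : ℕ) : FinHypergraph where
  verts := Finset.range n
  edges := (Finset.powersetCard r (Finset.range n)).filter
    (fun e => ∀ u ∈ e, ∀ v ∈ e, u ≠ v → u % r ≠ v % r)
  edge_sub := by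
    intro e he
    simp only [Finset.mem_filter, Finset.mem_powersetCard] at he
    exact he.1.1

/-- **Lemma 3.4.** Let `(x_1, …, x_r) ∈ X_{r,k}` with `x_0 = 0` and initial segment
`[0, I]`. If `I ≤ k − 1`, then every segment has length at most `I + 1`. -/
theorem segment_length_le (r k : ℕ) (hr : 2 ≤ r) (hk1 : 1 ≤ k) (hk2 : k ≤ r / 2)
    (x : ℕ → ℝ) (hx : memX r k x) (h0 : x 0 = 0)
    (I : ℕ) (hI : IsSegment r x 0 I) (hIk : I + 1 ≤ k) :
    ∀ L R, IsSegment r x L R → R - L + 1 ≤ I + 1 := by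
  obtain ⟨hx1, hmono, hxr, hineq⟩ := hx
  obtain ⟨-, hIr, hIu, hImax⟩ := hI
  have hxm : ∀ m, m ≤ I → x m = (m : ℝ) * x 1 := by
    intro m hm
    have := hIu m (Nat.zero_le m) hm
    simpa [h0] using this
  have hkr : k ≤ r := le_trans hk2 (Nat.div_le_self r 2)
  have hI1r : I + 1 ≤ r := le_trans hIk hkr
  have hI1 : 1 ≤ I := by
    by_contra h
    push_neg at h
    interval_cases I
    · have hu01 : UniformIntv x 0 1 := by
        intro i hi0 hi1
        interval_cases i <;> simp [h0]
      have := (hImax 0 1 le_rfl (Nat.zero_le 1) (by omega) hu01).2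
      omega
  have hge : (I : ℝ) * x 1 + x 1 ≤ x (I + 1) := by
    have h1 := hineq 1 I le_rfl hk1 hI1 (by omega)
    rw [add_comm 1 I] at h1
    have hxI := hxm I le_rfl
    linarith
  have hne : (I : ℝ) * x 1 + x 1 ≠ x (I + 1) := by
    intro heq
    have hu : UniformIntv x 0 (I + 1) := by
      intro i hi0 hi
      rcases Nat.lt_or_ge i (I + 1) with h' | h'
      · simpa [h0] using hxm i (by omega)
      · have hiI : i = I + 1 := by omega
        subst hiI
        rw [h0]
        push_cast
        linarith
    have := (hImax 0 (I + 1) le_rfl (by omega) hI1r hu).2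
    omega
  have hgt : (I : ℝ) * x 1 + x 1 < x (I + 1) := lt_of_le_of_ne hge hne
  intro L R hseg
  by_contra hcon
  push_neg at hcon
  obtain ⟨hLR, hRr, hu, hmax⟩ := hseg
  have hRL : I + 1 ≤ R - L := by omega
  rcases le_or_gt L I with hL | hL
  · have huR : UniformIntv x 0 R := by
      intro m hm0 hmR
      rcases le_or_gt m I with hmI | hmI
      · simpa [h0] using hxm m hmI
      · have hLm : L ≤ m := by omega
        have h2 := hu m hLm hmR
        have hxL : x L = (L : ℝ) * x 1 := hxm L hL
        rw [h2, hxL, Nat.cast_sub hLm, h0, Nat.sub_zero]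
        push_cast
        ring
    have := (hImax 0 R le_rfl (by omega) hRr huR).2
    omega
  · have h1 := hineq (I + 1) L (by omega) hIk (by omega) (by omega)
    have h2 := hu (L + (I + 1)) (by omega) (by omega)
    rw [Nat.add_sub_cancel_left] at h2
    rw [add_comm (I + 1) L] at h1
    push_cast at h2
    linarith
end

section
/- Let r ≥ 2, let 1 ≤ k ≤ ⌊r/2⌋, let (x_1,…,x_r) ∈ X_{r,k}, and set x_0 = 0. Let [L_1,R_1] and [L_2,R_2] be segments with L_1 < L_2, and let i, j be positive integers with i ∈ [L_1,R_1], i + j ∈ [L_2,R_2], R_2 − R_1 > j, and min{R_1 + 1, j} ≤ k. Then x_i + x_j < x_{i+j}. -/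
open Finset

lemma unif_diff {x : ℕ → ℝ} {L R a b : ℕ} (h : UniformIntv x L R)
    (hLa : L ≤ a) (hab : a ≤ b) (hbR : b ≤ R) :
    x b = x a + ((b - a : ℕ) : ℝ) * x 1 := by
  have ha := h a hLa (hab.trans hbR)
  have hb := h b (hLa.trans hab) hbR
  have hsplit : b - L = (b - a) + (a - L) := by omega
  rw [ha, hb, hsplit]
  push_cast
  ring

/-- **Lemma 3.6 (moving right).** Let `(x_1, …, x_r) ∈ X_{r,k}` with `x_0 = 0`, and let
`[L_1, R_1]`, `[L_2, R_2]` be segments with `L_1 < L_2`. If `i ∈ [L_1, R_1]` and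
`i + j ∈ [L_2, R_2]` with `R_2 − R_1 > j` and `min (R_1 + 1) j ≤ k`, then
`x_i + x_j < x_{i+j}`. -/
theorem strict_ineq_of_segments_right (r k : ℕ) (hr : 2 ≤ r) (hk1 : 1 ≤ k) (hk2 : k ≤ r / 2)
    (x : ℕ → ℝ) (hx : memX r k x) (h0 : x 0 = 0)
    (L1 R1 L2 R2 : ℕ) (hseg1 : IsSegment r x L1 R1) (hseg2 : IsSegment r x L2 R2)
    (hLL : L1 < L2) (i j : ℕ) (hi : 1 ≤ i) (hj : 1 ≤ j)
    (hiL : L1 ≤ i) (hiR : i ≤ R1) (hijL : L2 ≤ i + j) (hijR : i + j ≤ R2)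
    (hgap : R1 + j < R2) (hmin : min (R1 + 1) j ≤ k) :
    x i + x j < x (i + j) := by
  obtain ⟨hx1, hmono, hxr, hsup⟩ := hx
  obtain ⟨hL1R1, hR1r, U1, max1⟩ := hseg1
  obtain ⟨hL2R2, hR2r, U2, max2⟩ := hseg2
  have hR1 : 1 ≤ R1 := le_trans hi hiR
  have hjr : R1 + j + 1 ≤ R2 := hgap
  have hL2ij : L2 ≤ R1 + j := le_trans hijL (by omega)
  have e1 : x R1 = x i + ((R1 - i : ℕ) : ℝ) * x 1 := unif_diff U1 hiL hiR le_rfl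
  have e2 : x (R1 + j) = x (i + j) + (((R1 + j) - (i + j) : ℕ) : ℝ) * x 1 :=
    unif_diff U2 hijL (by omega) (by omega)
  have hsubeq : (R1 + j) - (i + j) = R1 - i := by omega
  rw [hsubeq] at e2
  have e3 : x (R1 + j + 1) = x (R1 + j) + x 1 := by
    have h' := unif_diff U2 hL2ij (Nat.le_succ _) (by omega)
    have h1 : R1 + j + 1 - (R1 + j) = 1 := by omega
    rw [h1] at h'
    push_cast at h'
    linarith
  have hweak : x 1 + x R1 ≤ x (1 + R1) := hsup 1 R1 le_rfl hk1 hR1 (by omega)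
  rw [Nat.add_comm 1 R1] at hweak
  have hstrict : x R1 + x 1 < x (R1 + 1) := by
    rcases eq_or_lt_of_le hweak with heq | h
    · exfalso
      have Unew : UniformIntv x L1 (R1 + 1) := by
        intro m hLm hmR
        rcases Nat.lt_or_ge m (R1 + 1) with h' | h'
        · exact U1 m hLm (by omega)
        · have hm : m = R1 + 1 := by omega
          subst hm
          have hU := U1 R1 hL1R1 le_rfl
          have hc : (R1 + 1 - L1 : ℕ) = (R1 - L1) + 1 := by omega
          rw [hc, ← heq, hU]
          push_cast
          ring
      have := max1 L1 (R1 + 1) le_rfl (Nat.le_succ _) (by omega) Unew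
      omega
    · linarith
  have hmid : x (R1 + 1) + x j ≤ x (R1 + 1 + j) := by
    rcases le_total (R1 + 1) j with h | h
    · have hk : R1 + 1 ≤ k := by omega
      exact hsup (R1 + 1) j (by omega) hk h (by omega)
    · have hk : j ≤ k := by omega
      have h' := hsup j (R1 + 1) hj hk h (by omega)
      have hco : j + (R1 + 1) = R1 + 1 + j := by omega
      rw [hco] at h'
      linarith
  have e4 : x (R1 + 1 + j) = x (R1 + j + 1) := by
    rw [show R1 + 1 + j = R1 + j + 1 from by omega]
  linarith
end

section
/- For every integer r ≥ 2 and every integer k with 1 ≤ k < ⌊r/e⌋ (where e is the base of the natural logarithm), there exists (x_1,…,x_r) ∈ X_{r,k} such that ∏_{i=1}^r x_i > r!/r^r. -/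
open Finset

lemma aux_one_add_sum_le_prod (s : Finset ℕ) (f : ℕ → ℝ) (h : ∀ i ∈ s, 0 ≤ f i) :
    1 + ∑ i ∈ s, f i ≤ ∏ i ∈ s, (1 + f i) := by
  induction s using Finset.cons_induction with
  | empty => simp
  | cons a s ha ih =>
    simp only [Finset.sum_cons, Finset.prod_cons]
    have h1 : ∀ i ∈ s, 0 ≤ f i := fun i hi => h i (Finset.mem_cons.mpr (Or.inr hi))
    have h2 : 0 ≤ f a := h a (Finset.mem_cons_self a s)
    have h3 : (0:ℝ) ≤ ∑ i ∈ s, f i := Finset.sum_nonneg h1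
    calc 1 + (f a + ∑ i ∈ s, f i) ≤ (1 + f a) * (1 + ∑ i ∈ s, f i) := by nlinarith
    _ ≤ (1 + f a) * ∏ i ∈ s, (1 + f i) :=
        mul_le_mul_of_nonneg_left (ih h1) (by linarith)

lemma aux_log_le_sum (k : ℕ) : ∀ r : ℕ, k ≤ r →
    Real.log ((r:ℝ)+1) - Real.log ((k:ℝ)+1) ≤ ∑ i ∈ Finset.Icc (k+1) r, (1 / (i:ℝ)) := by
  intro r
  induction r with
  | zero =>
    intro h
    interval_cases k
    simp
  | succ n ih =>
    intro h
    rcases Nat.lt_or_ge k (n+1) with h1 | h1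
    · have hkn : k ≤ n := Nat.lt_succ_iff.mp h1
      rw [Finset.sum_Icc_succ_top (by omega : k+1 ≤ n+1)]
      have hrec := ih hkn
      have hlog : Real.log ((n:ℝ)+1+1) - Real.log ((n:ℝ)+1) ≤ 1/((n:ℝ)+1) := by
        rw [← Real.log_div (by positivity) (by positivity)]
        have hh := Real.log_le_sub_one_of_pos (x := ((n:ℝ)+1+1)/((n:ℝ)+1)) (by positivity)
        have : ((n:ℝ)+1+1)/((n:ℝ)+1) - 1 = 1/((n:ℝ)+1) := by
          field_simp
          ring
        linarith [this ▸ hh]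
      have hcast : (((n+1:ℕ)):ℝ) = (n:ℝ)+1 := by push_cast; ring
      rw [hcast]
      push_cast
      push_cast at hrec
      linarith
    · have hk : k = n+1 := le_antisymm h h1
      subst hk
      simp

lemma aux_harmonic_gt_one (r k : ℕ) (hk1 : 1 ≤ k)
    (hk : k < ⌊(r : ℝ) / Real.exp 1⌋₊) :
    1 < ∑ i ∈ Finset.Icc (k+1) r, (1 / (i:ℝ)) := by
  have he : (0:ℝ) < Real.exp 1 := Real.exp_pos 1
  have hfl : (⌊(r : ℝ) / Real.exp 1⌋₊ : ℝ) ≤ (r:ℝ) / Real.exp 1 :=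
    Nat.floor_le (by positivity)
  have hk1' : ((k:ℝ)+1) ≤ (r:ℝ) / Real.exp 1 := by
    have : ((k+1:ℕ) : ℝ) ≤ (⌊(r : ℝ) / Real.exp 1⌋₊ : ℝ) := by
      exact_mod_cast Nat.cast_le.mpr hk
    push_cast at this
    linarith
  have hekr : Real.exp 1 * ((k:ℝ)+1) ≤ (r:ℝ) := by
    rw [le_div_iff₀ he] at hk1'
    linarith
  have hkr : k ≤ r := by
    have h2 : (2:ℝ) ≤ Real.exp 1 := by
      have := Real.add_one_le_exp (1:ℝ); linarith
    have hcast : (k:ℝ) ≤ (r:ℝ) := by nlinarith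
    exact_mod_cast hcast
  have hsum := aux_log_le_sum k r hkr
  have hgt : 1 < Real.log ((r:ℝ)+1) - Real.log ((k:ℝ)+1) := by
    have hlt : Real.exp 1 * ((k:ℝ)+1) < (r:ℝ)+1 := by linarith
    have hlog : 1 + Real.log ((k:ℝ)+1) < Real.log ((r:ℝ)+1) := by
      have h1 : Real.exp (1 + Real.log ((k:ℝ)+1)) < (r:ℝ)+1 := by
        rw [Real.exp_add, Real.exp_log (by positivity)]
        exact hlt
      have := (Real.lt_log_iff_exp_lt (by positivity : (0:ℝ) < (r:ℝ)+1)).mpr h1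
      exact this
    linarith
  linarith

set_option maxHeartbeats 1000000 in
/-- **Lemma 3.10 (the value `⌈r/e⌉` is essentially optimal).** For every `r ≥ 2` and
every `k` with `1 ≤ k < ⌊r/e⌋`, there exists `(x_1, …, x_r) ∈ X_{r,k}` with
`∏_{i=1}^r x_i > r!/r^r`. -/
theorem exists_large_prod (r k : ℕ) (hr : 2 ≤ r) (hk1 : 1 ≤ k)
    (hk : k < ⌊(r : ℝ) / Real.exp 1⌋₊) :
    ∃ x : ℕ → ℝ, memX r k x ∧
      (r.factorial : ℝ) / (r : ℝ) ^ r < ∏ i ∈ Finset.Icc 1 r, x i := by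
  classical
  -- basic positivity facts
  have hr0 : (0:ℝ) < (r:ℝ) := by positivity
  have hH := aux_harmonic_gt_one r k hk1 hk
  set Hs : ℝ := ∑ i ∈ Finset.Icc (k+1) r, (1 / (i:ℝ)) with hHs
  have hkr : k + 1 ≤ r := by
    by_contra hc
    push_neg at hc
    have : Finset.Icc (k+1) r = ∅ := Finset.Icc_eq_empty (by omega)
    rw [hHs, this] at hH
    simp at hH
    linarith
  -- the sum S
  set S : ℝ := ∑ i ∈ Finset.Icc (k+1) r, ((r:ℝ) - i) / i with hSdef
  have hScard : (Finset.Icc (k+1) r).card = r - k := by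
    rw [Nat.card_Icc]; omega
  have hSval : S = (r:ℝ) * Hs - ((r:ℝ) - k) := by
    have hcard : ((r:ℝ) - k) = ∑ _i ∈ Finset.Icc (k+1) r, (1:ℝ) := by
      rw [Finset.sum_const, hScard]
      have hrk' : ((r - k : ℕ) : ℝ) = (r:ℝ) - k := by
        have hle : k ≤ r := by omega
        push_cast [hle]; ring
      simp [hrk']
    have h1 : S + ((r:ℝ) - k) = (r:ℝ) * Hs := by
      rw [hSdef, hHs, Finset.mul_sum, hcard, ← Finset.sum_add_distrib]
      apply Finset.sum_congr rfl
      intro i hi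
      simp only [Finset.mem_Icc] at hi
      have hi0 : (0:ℝ) < (i:ℝ) := by
        have h1i : (1:ℕ) ≤ i := by omega
        exact_mod_cast Nat.lt_of_lt_of_le Nat.zero_lt_one h1i
      field_simp
      ring
    linarith
  have hSk : (k:ℝ) < S := by
    rw [hSval]
    nlinarith
  have hk0 : (0:ℝ) < (k:ℝ) := by exact_mod_cast hk1
  have hS0 : (0:ℝ) < S := lt_trans hk0 hSk
  -- the perturbation parameter
  set δ : ℝ := (S - k) / (2 * k * S) with hδdef
  have hδ0 : 0 < δ := by
    apply div_pos (by linarith) (by positivity)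
  have hk1r : (1:ℝ) ≤ (k:ℝ) := by exact_mod_cast hk1
  have hkδ : (k:ℝ) * δ < 1/2 := by
    have heq : (k:ℝ) * δ = (S - k)/(2*S) := by
      rw [hδdef]; field_simp
    rw [heq, div_lt_iff₀ (by positivity)]
    linarith
  have hδ1 : δ < 1 := by
    have hle : δ ≤ (k:ℝ) * δ := by nlinarith
    linarith
  set ε : ℝ := (1 - δ) / r with hεdef
  have hε0 : 0 < ε := by
    apply div_pos (by linarith) hr0
  have hεr : ε * r = 1 - δ := by
    rw [hεdef]; field_simp
  have hεr1 : ε * r < 1 := by rw [hεr]; linarith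
  have hkδS : (k:ℝ) * δ * S = (S - (k:ℝ)) / 2 := by
    rw [hδdef]
    field_simp
  have hεval : ε = (1 - δ) / r := hεdef
  clear_value Hs S δ ε
  clear hεdef hδdef hHs
  -- the tuple
  refine ⟨fun i => if i ≤ k then ε * i else 1 - ε * ((r:ℝ) - i), ?_, ?_⟩
  · -- membership in X
    refine ⟨?_, ?_, ?_, ?_⟩
    · simp only [if_pos hk1]
      simpa using mul_pos hε0 (by norm_num : (0:ℝ) < 1)
    · intro i hi1 hir
      by_cases h1 : i + 1 ≤ k
      · simp only [if_pos (by omega : i ≤ k), if_pos h1]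
        push_cast
        nlinarith [hε0]
      · by_cases h2 : i ≤ k
        · -- i = k
          simp only [if_pos h2, if_neg h1]
          have hik : i = k := by omega
          subst hik
          have hcast : ((i+1:ℕ):ℝ) = (i:ℝ)+1 := by push_cast; ring
          rw [hcast]
          nlinarith [hεr1, hε0, mul_pos hε0 hk0]
        · simp only [if_neg h2, if_neg (by omega : ¬ i + 1 ≤ k)]
          have hcast : ((i+1:ℕ):ℝ) = (i:ℝ)+1 := by push_cast; ring
          rw [hcast]
          nlinarith [hε0]
    · have hrk : ¬ r ≤ k := by omega
      simp only [if_neg hrk]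
      ring
    · intro i j hi1 hik hij hijr
      have hcast : ((i+j:ℕ):ℝ) = (i:ℝ)+(j:ℝ) := by push_cast; ring
      by_cases hjk : j ≤ k
      · by_cases hsk : i + j ≤ k
        · simp only [if_pos hik, if_pos hjk, if_pos hsk, hcast]
          exact le_of_eq (by ring)
        · simp only [if_pos hik, if_pos hjk, if_neg hsk, hcast]
          nlinarith [hεr1]
      · have hsk : ¬ i + j ≤ k := by omega
        simp only [if_pos hik, if_neg hjk, if_neg hsk, hcast]
        exact le_of_eq (by ring)
  · -- the product bound
    have hx_eq : ∀ i ∈ Finset.Icc 1 r,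
        (if i ≤ k then ε * i else 1 - ε * ((r:ℝ) - i))
          = ((i:ℝ)/(r:ℝ)) * (if i ≤ k then (1 - δ) else 1 + δ * ((r:ℝ) - i) / i) := by
      intro i hi
      simp only [Finset.mem_Icc] at hi
      have hi0 : (0:ℝ) < (i:ℝ) := by exact_mod_cast hi.1
      by_cases hik : i ≤ k
      · simp only [if_pos hik, hεval]
        field_simp
      · simp only [if_neg hik, hεval]
        field_simp
        ring
    rw [Finset.prod_congr rfl hx_eq, Finset.prod_mul_distrib]
    have hfact : ∏ i ∈ Finset.Icc 1 r, ((i:ℝ)/(r:ℝ)) = (r.factorial : ℝ) / (r:ℝ)^r := by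
      rw [Finset.prod_div_distrib]
      congr 1
      · rw [← Nat.cast_prod]
        congr 1
        have : Finset.Icc 1 r = Finset.Ico 1 (r+1) := by
          rw [Finset.Ico_add_one_right_eq_Icc]
        rw [this, Finset.prod_Ico_id_eq_factorial]
      · rw [Finset.prod_const, Nat.card_Icc]
        norm_num
    rw [hfact]
    have hfpos : (0:ℝ) < (r.factorial : ℝ) / (r:ℝ)^r := by positivity
    have hY : 1 < ∏ i ∈ Finset.Icc 1 r,
        (if i ≤ k then (1 - δ) else 1 + δ * ((r:ℝ) - i) / i) := by
      have hsplit : (∏ i ∈ Finset.Ioc 0 k,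
            (if i ≤ k then (1 - δ) else 1 + δ * ((r:ℝ) - i) / i))
          * (∏ i ∈ Finset.Ioc k r,
            (if i ≤ k then (1 - δ) else 1 + δ * ((r:ℝ) - i) / i))
          = ∏ i ∈ Finset.Ioc 0 r,
            (if i ≤ k then (1 - δ) else 1 + δ * ((r:ℝ) - i) / i) :=
        Finset.prod_Ioc_consecutive _ (by omega) (by omega)
      have hIcc : Finset.Icc 1 r = Finset.Ioc 0 r := rfl
      have hIcck : Finset.Icc 1 k = Finset.Ioc 0 k := rfl
      have hIcck2 : Finset.Icc (k+1) r = Finset.Ioc k r := by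
        ext i; simp [Finset.mem_Icc, Finset.mem_Ioc]
      rw [hIcc, ← hsplit]
      have h1 : (∏ i ∈ Finset.Ioc 0 k,
          (if i ≤ k then (1 - δ) else 1 + δ * ((r:ℝ) - i) / i)) = (1-δ)^k := by
        rw [Finset.prod_congr rfl (fun i hi => by
          simp only [Finset.mem_Ioc] at hi
          rw [if_pos hi.2]), Finset.prod_const, Nat.card_Ioc]
        norm_num
      have h2 : (∏ i ∈ Finset.Ioc k r,
          (if i ≤ k then (1 - δ) else 1 + δ * ((r:ℝ) - i) / i))
          = ∏ i ∈ Finset.Ioc k r, (1 + δ * ((r:ℝ) - i) / i) := by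
        apply Finset.prod_congr rfl
        intro i hi
        simp only [Finset.mem_Ioc] at hi
        rw [if_neg (by omega)]
      rw [h1, h2]
      have hnn : ∀ i ∈ Finset.Ioc k r, 0 ≤ δ * ((r:ℝ) - i) / i := by
        intro i hi
        simp only [Finset.mem_Ioc] at hi
        have hi0 : (0:ℝ) < (i:ℝ) := by
          exact_mod_cast Nat.lt_of_le_of_lt (Nat.zero_le k) hi.1
        have hir : (i:ℝ) ≤ (r:ℝ) := by exact_mod_cast hi.2
        exact div_nonneg (mul_nonneg hδ0.le (by linarith)) hi0.le
      have hprod_ge := aux_one_add_sum_le_prod (Finset.Ioc k r) (fun i => δ * ((r:ℝ) - i) / i) hnn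
      have hsumS : ∑ i ∈ Finset.Ioc k r, δ * ((r:ℝ) - i) / i = δ * S := by
        rw [hSdef, Finset.mul_sum, hIcck2]
        apply Finset.sum_congr rfl
        intro i _
        ring
      rw [hsumS] at hprod_ge
      have hpow : 1 - (k:ℝ) * δ ≤ (1-δ)^k := by
        have := one_add_mul_le_pow (a := -δ) (by linarith) k
        have heq : (1 + -δ) = 1 - δ := by ring
        rw [heq] at this
        linarith
      have hstep : (1 - (k:ℝ)*δ) * (1 + δ*S) ≤ (1-δ)^k * ∏ i ∈ Finset.Ioc k r, (1 + δ * ((r:ℝ) - i) / i) := by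
        apply mul_le_mul hpow hprod_ge (by nlinarith) (pow_nonneg (by linarith) k)
      have hfinal : 1 < (1 - (k:ℝ)*δ) * (1 + δ*S) := by
        have hexp : (1 - (k:ℝ)*δ) * (1 + δ*S) = 1 + δ*(S - k) - (k:ℝ)*δ*S*δ := by ring
        rw [hexp, hkδS]
        have h0 : 0 < δ * (S - k) - (S - (k:ℝ))/2 * δ := by
          nlinarith [mul_pos hδ0 (sub_pos.mpr hSk)]
        linarith
      linarith
    nlinarith
end

section
/- For every integer r ≥ 2 and every family F of r-uniform hypergraphs, the Turán density satisfies π(F) = sup{b(H) : H is a finite F-hom-free r-uniform hypergraph}. -/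
open Finset

/-! ## Auxiliary development for Lemma 2.6 -/

open FinHypergraph

theorem FinHypergraph.ext' {H G : FinHypergraph} (hv : H.verts = G.verts)
    (he : H.edges = G.edges) : H = G := by
  cases H; cases G; simp_all

def exSet (r n : ℕ) (𝓕 : Set FinHypergraph) : Set ℕ :=
  {m : ℕ | ∃ H : FinHypergraph, H.verts = Finset.range n ∧ H.IsUniform r ∧
    H.Free 𝓕 ∧ H.edges.card = m}

theorem exNum_def (r n : ℕ) (𝓕 : Set FinHypergraph) : exNum r n 𝓕 = sSup (exSet r n 𝓕) := rfl

theorem edges_subset_powersetCard {r : ℕ} {H : FinHypergraph} (hu : H.IsUniform r) :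
    H.edges ⊆ Finset.powersetCard r H.verts := by
  intro e he
  exact Finset.mem_powersetCard.2 ⟨H.edge_sub e he, hu e he⟩

theorem card_edges_le {r : ℕ} {H : FinHypergraph} (hu : H.IsUniform r) :
    H.edges.card ≤ H.verts.card.choose r := by
  simpa [Finset.card_powersetCard] using Finset.card_le_card (edges_subset_powersetCard hu)

theorem exSet_bddAbove (r n : ℕ) (𝓕 : Set FinHypergraph) :
    BddAbove (exSet r n 𝓕) := by
  refine ⟨n.choose r, fun m hm => ?_⟩
  obtain ⟨H, hv, hu, _, hc⟩ := hm
  have := card_edges_le hu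
  rwa [hv, Finset.card_range, hc] at this

theorem card_le_exNum {r n : ℕ} {𝓕 : Set FinHypergraph} {H : FinHypergraph}
    (hv : H.verts = Finset.range n) (hu : H.IsUniform r) (hf : H.Free 𝓕) :
    H.edges.card ≤ exNum r n 𝓕 :=
  le_csSup (exSet_bddAbove r n 𝓕) ⟨H, hv, hu, hf, rfl⟩

theorem exNum_le_choose (r n : ℕ) (𝓕 : Set FinHypergraph) : exNum r n 𝓕 ≤ n.choose r := by
  rw [exNum_def]
  exact csSup_le' (fun m hm => by
    obtain ⟨H, hv, hu, _, hc⟩ := hm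
    have := card_edges_le hu
    rwa [hv, Finset.card_range, hc] at this)

def emptyHG (n : ℕ) : FinHypergraph := ⟨Finset.range n, ∅, by simp⟩

theorem emptyHG_free {𝓕 : Set FinHypergraph} (hNE : ∀ F ∈ 𝓕, F.edges.Nonempty) (n : ℕ) :
    (emptyHG n).Free 𝓕 := by
  intro F hF ⟨f, _, _, fe⟩
  obtain ⟨e, he⟩ := hNE F hF
  exact absurd (fe e he) (by simp [emptyHG])

theorem exSet_nonempty {r n : ℕ} {𝓕 : Set FinHypergraph} (hNE : ∀ F ∈ 𝓕, F.edges.Nonempty) :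
    (exSet r n 𝓕).Nonempty :=
  ⟨0, emptyHG n, rfl, by simp [emptyHG, IsUniform], emptyHG_free hNE n, by simp [emptyHG]⟩

theorem exNum_spec {r n : ℕ} {𝓕 : Set FinHypergraph} (hNE : ∀ F ∈ 𝓕, F.edges.Nonempty) :
    ∃ H : FinHypergraph, H.verts = Finset.range n ∧ H.IsUniform r ∧ H.Free 𝓕 ∧
      H.edges.card = exNum r n 𝓕 :=
  Nat.sSup_mem (exSet_nonempty hNE) (exSet_bddAbove r n 𝓕)

/-! ### Relabelling -/

def relabel (φ : ℕ → ℕ) (T : Finset ℕ) (G : FinHypergraph) : FinHypergraph where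
  verts := T.image φ
  edges := (G.edges.filter (fun e => e ⊆ T)).image (Finset.image φ)
  edge_sub := by
    intro e he
    simp only [Finset.mem_image, Finset.mem_filter] at he
    obtain ⟨e0, ⟨_, h0⟩, rfl⟩ := he
    exact Finset.image_subset_image h0

section Relabel
variable {φ ψ : ℕ → ℕ} {T : Finset ℕ} {G : FinHypergraph} {r : ℕ} {𝓕 : Set FinHypergraph}

theorem image_image_of_inv (hinv : ∀ x ∈ T, ψ (φ x) = x) {e : Finset ℕ} (he : e ⊆ T) :
    (e.image φ).image ψ = e := by
  rw [Finset.image_image]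
  have : ∀ x ∈ e, (ψ ∘ φ) x = id x := fun x hx => hinv x (he hx)
  rw [Finset.image_congr this, Finset.image_id]

theorem relabel_uniform (hu : G.IsUniform r) (hinj : Set.InjOn φ T) :
    (relabel φ T G).IsUniform r := by
  intro e he
  simp only [relabel, Finset.mem_image, Finset.mem_filter] at he
  obtain ⟨e0, ⟨h0, hsub⟩, rfl⟩ := he
  rw [Finset.card_image_of_injOn (hinj.mono (by exact_mod_cast hsub))]
  exact hu e0 h0

theorem relabel_card (hinv : ∀ x ∈ T, ψ (φ x) = x) :
    (relabel φ T G).edges.card = (G.edges.filter (fun e => e ⊆ T)).card := by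
  apply Finset.card_image_of_injOn
  intro e1 h1 e2 h2 h
  simp only [Finset.mem_coe, Finset.mem_filter] at h1 h2
  rw [← image_image_of_inv hinv h1.2, h, image_image_of_inv hinv h2.2]

theorem relabel_free (hT : T ⊆ G.verts) (hinv : ∀ x ∈ T, ψ (φ x) = x)
    (hfree : G.Free 𝓕) : (relabel φ T G).Free 𝓕 := by
  rintro F hF ⟨f, finj, fv, fe⟩
  have key : ∀ v ∈ F.verts, f v ∈ T.image φ := fv
  apply hfree F hF
  refine ⟨ψ ∘ f, ?_, ?_, ?_⟩
  · intro v hv w hw h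
    apply finj hv hw
    obtain ⟨x, hx, hfx⟩ := Finset.mem_image.1 (key v hv)
    obtain ⟨y, hy, hfy⟩ := Finset.mem_image.1 (key w hw)
    have : φ (ψ (f v)) = f v := by rw [← hfx, hinv x hx]
    have h2 : φ (ψ (f w)) = f w := by rw [← hfy, hinv y hy]
    simp only [Function.comp] at h
    rw [← this, ← h2, h]
  · intro v hv
    obtain ⟨x, hx, hfx⟩ := Finset.mem_image.1 (key v hv)
    have : ψ (f v) = x := by rw [← hfx, hinv x hx]
    simp only [Function.comp_apply, this]
    exact hT hx
  · intro e he
    have : e.image (ψ ∘ f) = (e.image f).image ψ := by rw [Finset.image_image]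
    rw [this]
    have hfe := fe e he
    simp only [relabel, Finset.mem_image, Finset.mem_filter] at hfe
    obtain ⟨e0, ⟨h0, hsub⟩, heq⟩ := hfe
    rw [← heq, image_image_of_inv hinv hsub]
    exact h0

end Relabel

/-! ### rank maps -/

noncomputable def rk (T : Finset ℕ) : ℕ → ℕ := fun x =>
  if hx : x ∈ T then ((T.orderIsoOfFin rfl).symm ⟨x, hx⟩ : Fin T.card) else 0

noncomputable def unrk (T : Finset ℕ) : ℕ → ℕ := fun k =>
  if hk : k < T.card then (T.orderIsoOfFin rfl ⟨k, hk⟩ : ℕ) else 0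

theorem rk_lt {T : Finset ℕ} {x : ℕ} (hx : x ∈ T) : rk T x < T.card := by
  rw [rk, dif_pos hx]; exact ((T.orderIsoOfFin rfl).symm ⟨x, hx⟩).isLt

theorem unrk_mem {T : Finset ℕ} {k : ℕ} (hk : k < T.card) : unrk T k ∈ T := by
  rw [unrk, dif_pos hk]; exact (T.orderIsoOfFin rfl ⟨k, hk⟩).2

theorem unrk_rk {T : Finset ℕ} : ∀ x ∈ T, unrk T (rk T x) = x := by
  intro x hx
  rw [rk, dif_pos hx, unrk, dif_pos (by exact ((T.orderIsoOfFin rfl).symm ⟨x, hx⟩).isLt)]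
  have : (⟨((T.orderIsoOfFin rfl).symm ⟨x, hx⟩ : Fin T.card), _⟩ : Fin T.card)
      = (T.orderIsoOfFin rfl).symm ⟨x, hx⟩ := Fin.ext rfl
  rw [this, OrderIso.apply_symm_apply]

theorem rk_unrk {T : Finset ℕ} : ∀ k < T.card, rk T (unrk T k) = k := by
  intro k hk
  rw [unrk, dif_pos hk, rk, dif_pos (by exact (T.orderIsoOfFin rfl ⟨k, hk⟩).2)]
  have : (⟨((T.orderIsoOfFin rfl) ⟨k, hk⟩ : T), _⟩ : {x // x ∈ T})
      = (T.orderIsoOfFin rfl) ⟨k, hk⟩ := rfl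
  rw [this, OrderIso.symm_apply_apply]

theorem rk_injOn {T : Finset ℕ} : Set.InjOn (rk T) T := by
  intro x hx y hy h
  rw [← unrk_rk x hx, ← unrk_rk y hy, h]

theorem image_rk {T : Finset ℕ} : T.image (rk T) = Finset.range T.card := by
  apply Finset.eq_of_subset_of_card_le
  · intro k hk
    obtain ⟨x, hx, rfl⟩ := Finset.mem_image.1 hk
    exact Finset.mem_range.2 (rk_lt hx)
  · rw [Finset.card_range, Finset.card_image_of_injOn rk_injOn]

/-! ### induced subgraph -/

noncomputable def induce (T : Finset ℕ) (G : FinHypergraph) : FinHypergraph := relabel (rk T) T G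

theorem induce_verts {T : Finset ℕ} {G : FinHypergraph} :
    (induce T G).verts = Finset.range T.card := image_rk

theorem induce_uniform {r : ℕ} {T : Finset ℕ} {G : FinHypergraph} (hu : G.IsUniform r) :
    (induce T G).IsUniform r := relabel_uniform hu rk_injOn

theorem induce_card {T : Finset ℕ} {G : FinHypergraph} :
    (induce T G).edges.card = (G.edges.filter (fun e => e ⊆ T)).card :=
  relabel_card unrk_rk

theorem induce_free {T : Finset ℕ} {G : FinHypergraph} {𝓕 : Set FinHypergraph}
    (hT : T ⊆ G.verts) (hfree : G.Free 𝓕) : (induce T G).Free 𝓕 :=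
  relabel_free hT unrk_rk hfree

theorem induce_le_exNum {r : ℕ} {T : Finset ℕ} {G : FinHypergraph} {𝓕 : Set FinHypergraph}
    (hT : T ⊆ G.verts) (hfree : G.Free 𝓕) (hu : G.IsUniform r) :
    (G.edges.filter (fun e => e ⊆ T)).card ≤ exNum r T.card 𝓕 := by
  rw [← induce_card]
  exact card_le_exNum induce_verts (induce_uniform hu) (induce_free hT hfree)
/-! ### Monotonicity and the limit -/

theorem exNum_mono {r : ℕ} {𝓕 : Set FinHypergraph} (hNE : ∀ F ∈ 𝓕, F.edges.Nonempty) (n : ℕ) :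
    exNum r (n + 1) 𝓕 * (n + 1 - r) ≤ (n + 1) * exNum r n 𝓕 := by
  obtain ⟨G, hv, hu, hfree, hc⟩ := exNum_spec (r := r) (n := n + 1) hNE
  have key : ∀ j ∈ Finset.range (n + 1),
      (G.edges.filter (fun e => e ⊆ (Finset.range (n + 1)).erase j)).card ≤ exNum r n 𝓕 := by
    intro j hj
    have hcard : ((Finset.range (n + 1)).erase j).card = n := by
      rw [Finset.card_erase_of_mem (by exact hj), Finset.card_range]; omega
    have := induce_le_exNum (T := (Finset.range (n + 1)).erase j)
      (by rw [hv]; exact Finset.erase_subset _ _) hfree hu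
    rwa [hcard] at this
  have swap : ∑ j ∈ Finset.range (n + 1),
      (G.edges.filter (fun e => e ⊆ (Finset.range (n + 1)).erase j)).card
      = G.edges.card * (n + 1 - r) := by
    have step : ∀ j ∈ Finset.range (n + 1),
        (G.edges.filter (fun e => e ⊆ (Finset.range (n + 1)).erase j)).card
        = (G.edges.filter (fun e => j ∉ e)).card := by
      intro j _
      congr 1
      apply Finset.filter_congr
      intro e he
      have hsub : e ⊆ Finset.range (n + 1) := by rw [← hv]; exact G.edge_sub e he
      simp only [Finset.subset_erase, eq_iff_iff]
      constructor
      · exact fun h => h.2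
      · exact fun h => ⟨hsub, h⟩
    rw [Finset.sum_congr rfl step]
    have : ∀ j ∈ Finset.range (n + 1), (G.edges.filter (fun e => j ∉ e)).card
        = ∑ e ∈ G.edges, if j ∉ e then 1 else 0 := by
      intro j _; rw [Finset.card_filter]
    rw [Finset.sum_congr rfl this, Finset.sum_comm]
    rw [Finset.card_eq_sum_ones G.edges, Finset.sum_mul]
    apply Finset.sum_congr rfl
    intro e he
    have hsub : e ⊆ Finset.range (n + 1) := by rw [← hv]; exact G.edge_sub e he
    have : ∑ j ∈ Finset.range (n + 1), (if j ∉ e then 1 else 0)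
        = ((Finset.range (n + 1)).filter (fun j => j ∉ e)).card := by
      rw [Finset.card_filter]
    rw [this, ← Finset.sdiff_eq_filter, Finset.card_sdiff_of_subset hsub, Finset.card_range,
      hu e he, one_mul]
  calc exNum r (n + 1) 𝓕 * (n + 1 - r) = G.edges.card * (n + 1 - r) := by rw [hc]
    _ = ∑ j ∈ Finset.range (n + 1),
        (G.edges.filter (fun e => e ⊆ (Finset.range (n + 1)).erase j)).card := swap.symm
    _ ≤ ∑ _j ∈ Finset.range (n + 1), exNum r n 𝓕 := Finset.sum_le_sum key
    _ = (n + 1) * exNum r n 𝓕 := by rw [Finset.sum_const, Finset.card_range, smul_eq_mul]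

noncomputable def aseq (r : ℕ) (𝓕 : Set FinHypergraph) (n : ℕ) : ℝ :=
  (exNum r n 𝓕 : ℝ) / (n.choose r : ℝ)

theorem aseq_nonneg (r : ℕ) (𝓕 : Set FinHypergraph) (n : ℕ) : 0 ≤ aseq r 𝓕 n := by
  unfold aseq; positivity

theorem aseq_le_one (r : ℕ) (𝓕 : Set FinHypergraph) {n : ℕ} (hn : r ≤ n) :
    aseq r 𝓕 n ≤ 1 := by
  unfold aseq
  rw [div_le_one (by exact_mod_cast Nat.choose_pos hn)]
  exact_mod_cast exNum_le_choose r n 𝓕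

theorem aseq_anti {r : ℕ} {𝓕 : Set FinHypergraph} (hNE : ∀ F ∈ 𝓕, F.edges.Nonempty)
    {n : ℕ} (hn : r ≤ n) : aseq r 𝓕 (n + 1) ≤ aseq r 𝓕 n := by
  have hnat : exNum r (n + 1) 𝓕 * n.choose r ≤ exNum r n 𝓕 * (n + 1).choose r := by
    have h1 : exNum r (n + 1) 𝓕 * n.choose r * (n + 1)
        = exNum r (n + 1) 𝓕 * (n + 1 - r) * (n + 1).choose r := by
      rw [mul_assoc, Nat.choose_mul_succ_eq]; ring
    have h2 : exNum r (n + 1) 𝓕 * (n + 1 - r) * (n + 1).choose r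
        ≤ (n + 1) * exNum r n 𝓕 * (n + 1).choose r :=
      Nat.mul_le_mul_right _ (exNum_mono hNE n)
    have h3 : exNum r (n + 1) 𝓕 * n.choose r * (n + 1)
        ≤ exNum r n 𝓕 * (n + 1).choose r * (n + 1) := by
      rw [h1]; calc _ ≤ (n + 1) * exNum r n 𝓕 * (n + 1).choose r := h2
        _ = exNum r n 𝓕 * (n + 1).choose r * (n + 1) := by ring
    exact Nat.le_of_mul_le_mul_right h3 (Nat.succ_pos n)
  unfold aseq
  rw [div_le_div_iff₀ (by exact_mod_cast Nat.choose_pos (le_trans hn (Nat.le_succ n)))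
    (by exact_mod_cast Nat.choose_pos hn)]
  exact_mod_cast hnat

noncomputable def piLim (r : ℕ) (𝓕 : Set FinHypergraph) : ℝ := ⨅ k : ℕ, aseq r 𝓕 (k + r)

theorem aseq_tendsto {r : ℕ} {𝓕 : Set FinHypergraph} (hNE : ∀ F ∈ 𝓕, F.edges.Nonempty) :
    Filter.Tendsto (aseq r 𝓕) Filter.atTop (nhds (piLim r 𝓕)) := by
  have hb : Antitone (fun k => aseq r 𝓕 (k + r)) := by
    apply antitone_nat_of_succ_le
    intro k
    have h := aseq_anti hNE (Nat.le_add_left r k)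
    have e : k + r + 1 = k + 1 + r := by omega
    rwa [e] at h
  have hbd : BddBelow (Set.range fun k => aseq r 𝓕 (k + r)) := by
    refine ⟨0, fun x hx => ?_⟩
    obtain ⟨k, rfl⟩ := hx
    exact aseq_nonneg r 𝓕 (k + r)
  have h2 : Filter.Tendsto (fun k => aseq r 𝓕 (k + r)) Filter.atTop (nhds (piLim r 𝓕)) :=
    tendsto_atTop_ciInf hb hbd
  exact (Filter.tendsto_add_atTop_iff_nat (f := aseq r 𝓕) r).1 h2

theorem piLim_le_aseq {r : ℕ} {𝓕 : Set FinHypergraph} {n : ℕ} (hn : r ≤ n) :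
    piLim r 𝓕 ≤ aseq r 𝓕 n := by
  have hbd : BddBelow (Set.range fun k => aseq r 𝓕 (k + r)) := by
    refine ⟨0, fun x hx => ?_⟩
    obtain ⟨k, rfl⟩ := hx
    exact aseq_nonneg r 𝓕 (k + r)
  have := ciInf_le hbd (n - r)
  rwa [Nat.sub_add_cancel hn] at this

theorem piLim_nonneg (r : ℕ) (𝓕 : Set FinHypergraph) : 0 ≤ piLim r 𝓕 :=
  le_ciInf (fun k => aseq_nonneg r 𝓕 (k + r))
/-! ### Lagrangian basics -/

def LagSet (H : FinHypergraph) : Set ℝ :=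
  {s : ℝ | ∃ w : ℕ → ℝ, (∀ v, 0 ≤ w v) ∧ (∑ v ∈ H.verts, w v) = 1 ∧
    s = ∑ e ∈ H.edges, ∏ v ∈ e, w v}

theorem lagrangian_def (H : FinHypergraph) : lagrangian H = sSup (LagSet H) := rfl

theorem lagSet_nonneg {H : FinHypergraph} {s : ℝ} (hs : s ∈ LagSet H) : 0 ≤ s := by
  obtain ⟨w, hw, _, rfl⟩ := hs
  exact Finset.sum_nonneg fun e _ => Finset.prod_nonneg fun v _ => hw v

theorem lagSet_le_card {H : FinHypergraph} {s : ℝ} (hs : s ∈ LagSet H) :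
    s ≤ H.edges.card := by
  obtain ⟨w, hw, hsum, rfl⟩ := hs
  calc ∑ e ∈ H.edges, ∏ v ∈ e, w v ≤ ∑ _e ∈ H.edges, (1 : ℝ) := by
        apply Finset.sum_le_sum
        intro e he
        apply Finset.prod_le_one (fun v _ => hw v)
        intro v hv
        have hv' : v ∈ H.verts := H.edge_sub e he hv
        rw [← hsum]
        exact Finset.single_le_sum (fun u _ => hw u) hv'
    _ = H.edges.card := by simp

theorem lagSet_bddAbove (H : FinHypergraph) : BddAbove (LagSet H) :=
  ⟨H.edges.card, fun _ hs => lagSet_le_card hs⟩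

theorem lagrangian_nonneg (H : FinHypergraph) : 0 ≤ lagrangian H := by
  rcases Set.eq_empty_or_nonempty (LagSet H) with h | h
  · rw [lagrangian_def, h, Real.sSup_empty]
  · obtain ⟨s, hs⟩ := h
    exact le_trans (lagSet_nonneg hs) (le_csSup (lagSet_bddAbove H) hs)

theorem uniform_weight_mem {r : ℕ} {H : FinHypergraph} (hu : H.IsUniform r)
    (hne : H.verts.Nonempty) :
    (H.edges.card : ℝ) * ((H.verts.card : ℝ)⁻¹) ^ r ∈ LagSet H := by
  have hpos : (0 : ℝ) < H.verts.card := by exact_mod_cast Finset.card_pos.2 hne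
  refine ⟨fun v => if v ∈ H.verts then (H.verts.card : ℝ)⁻¹ else 0, ?_, ?_, ?_⟩
  · intro v; dsimp only; split <;> positivity
  · rw [Finset.sum_ite_mem, Finset.inter_self, Finset.sum_const, nsmul_eq_mul,
      mul_inv_cancel₀ (ne_of_gt hpos)]
  · rw [Finset.sum_congr rfl (fun e he => ?_), Finset.sum_const, nsmul_eq_mul]
    have : ∀ v ∈ e, (if v ∈ H.verts then (H.verts.card : ℝ)⁻¹ else 0)
        = (H.verts.card : ℝ)⁻¹ := fun v hv => if_pos (H.edge_sub e he hv)
    rw [Finset.prod_congr rfl this, Finset.prod_const, hu e he]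

theorem lagrangian_ge_uniform {r : ℕ} {H : FinHypergraph} (hu : H.IsUniform r)
    (hne : H.verts.Nonempty) :
    (H.edges.card : ℝ) * ((H.verts.card : ℝ)⁻¹) ^ r ≤ lagrangian H :=
  le_csSup (lagSet_bddAbove H) (uniform_weight_mem hu hne)

/-! ### unrk image -/

theorem unrk_injOn {T : Finset ℕ} : Set.InjOn (unrk T) (Finset.range T.card) := by
  intro x hx y hy h
  rw [Finset.coe_range, Set.mem_Iio] at hx hy
  rw [← rk_unrk x hx, ← rk_unrk y hy, h]

theorem image_unrk {T : Finset ℕ} : (Finset.range T.card).image (unrk T) = T := by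
  apply Finset.eq_of_subset_of_card_le
  · intro v hv
    obtain ⟨k, hk, rfl⟩ := Finset.mem_image.1 hv
    exact unrk_mem (Finset.mem_range.1 hk)
  · rw [Finset.card_image_of_injOn (by simpa using unrk_injOn), Finset.card_range]

/-! ### key upper bound -/

theorem prod_unrk {r : ℕ} {e : Finset ℕ} (h : e.card = r) (w : ℕ → ℝ) (σ : Equiv.Perm (Fin r)) :
    ∏ i : Fin r, w (unrk e (σ i)) = ∏ v ∈ e, w v := by
  have h1 : ∏ i : Fin r, w (unrk e (σ i)) = ∏ i : Fin r, w (unrk e i) :=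
    Equiv.prod_comp σ (fun j : Fin r => w (unrk e (j : ℕ)))
  have h2 : ∏ v ∈ e, w v = ∏ k ∈ Finset.range e.card, w (unrk e k) := by
    conv_lhs => rw [← image_unrk (T := e)]
    rw [Finset.prod_image (by simpa using unrk_injOn)]
  rw [h1, Fin.prod_univ_eq_prod_range (fun k => w (unrk e k)) r, h2, h]

theorem esymm_bound (r : ℕ) (V : Finset ℕ) (w : ℕ → ℝ) (hw : ∀ v, 0 ≤ w v) :
    (r.factorial : ℝ) * ∑ e ∈ Finset.powersetCard r V, ∏ v ∈ e, w v
      ≤ (∑ v ∈ V, w v) ^ r := by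
  classical
  have expand : (∑ v ∈ V, w v) ^ r
      = ∑ f ∈ Fintype.piFinset (fun _ : Fin r => V), ∏ i : Fin r, w (f i) := by
    rw [← Fin.prod_const r (∑ v ∈ V, w v)]
    exact Finset.prod_univ_sum (fun _ => V) (fun _ v => w v)
  rw [expand]
  set Φ : Finset ℕ × Equiv.Perm (Fin r) → (Fin r → ℕ) :=
    fun p i => unrk p.1 (p.2 i) with hΦ
  have himg : ∀ p ∈ Finset.powersetCard r V ×ˢ (Finset.univ : Finset (Equiv.Perm (Fin r))),
      Finset.image (Φ p) Finset.univ = p.1 := by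
    rintro ⟨e, σ⟩ hp
    obtain ⟨hsub, hcard⟩ := Finset.mem_powersetCard.1 (Finset.mem_product.1 hp).1
    have h1 : Finset.image (fun i : Fin r => ((σ i : Fin r) : ℕ)) Finset.univ
        = Finset.range r := by
      apply Finset.eq_of_subset_of_card_le
      · intro k hk
        obtain ⟨i, _, rfl⟩ := Finset.mem_image.1 hk
        exact Finset.mem_range.2 (σ i).isLt
      · rw [Finset.card_range,
          show (fun i : Fin r => ((σ i : Fin r) : ℕ)) = Fin.val ∘ σ from rfl,
          Finset.card_image_of_injective _ (Fin.val_injective.comp σ.injective)]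
        simp
    calc Finset.image (Φ (e, σ)) Finset.univ
        = Finset.image (unrk e) (Finset.image (fun i : Fin r => ((σ i : Fin r) : ℕ))
            Finset.univ) := by rw [Finset.image_image]; rfl
      _ = Finset.image (unrk e) (Finset.range e.card) := by rw [h1, hcard]
      _ = e := image_unrk
  have hmaps : ∀ p ∈ Finset.powersetCard r V ×ˢ (Finset.univ : Finset (Equiv.Perm (Fin r))),
      Φ p ∈ Fintype.piFinset (fun _ : Fin r => V) := by
    rintro ⟨e, σ⟩ hp
    obtain ⟨hsub, hcard⟩ := Finset.mem_powersetCard.1 (Finset.mem_product.1 hp).1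
    rw [Fintype.mem_piFinset]
    intro i
    apply hsub
    apply unrk_mem
    rw [hcard]; exact (σ i).isLt
  have hinj : ∀ p ∈ Finset.powersetCard r V ×ˢ
      (Finset.univ : Finset (Equiv.Perm (Fin r))),
      ∀ q ∈ Finset.powersetCard r V ×ˢ (Finset.univ : Finset (Equiv.Perm (Fin r))),
      Φ p = Φ q → p = q := by
    rintro ⟨e, σ⟩ hp ⟨e', σ'⟩ hp' h
    have he : e = e' := by
      have a1 := himg _ hp
      have a2 := himg _ hp'
      dsimp only at a1 a2
      rw [← a1, ← a2, h]
    subst he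
    obtain ⟨hsub, hcard⟩ := Finset.mem_powersetCard.1 (Finset.mem_product.1 hp).1
    have hσ : σ = σ' := by
      apply Equiv.ext
      intro i
      have := congrFun h i
      simp only [hΦ] at this
      have h1 : rk e (unrk e (σ i)) = rk e (unrk e (σ' i)) := by rw [this]
      rw [rk_unrk _ (by rw [hcard]; exact (σ i).isLt),
        rk_unrk _ (by rw [hcard]; exact (σ' i).isLt)] at h1
      exact Fin.ext h1
    rw [hσ]
  calc (r.factorial : ℝ) * ∑ e ∈ Finset.powersetCard r V, ∏ v ∈ e, w v
      = ∑ e ∈ Finset.powersetCard r V, ∑ _σ ∈ (Finset.univ : Finset (Equiv.Perm (Fin r))),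
          ∏ v ∈ e, w v := by
        rw [Finset.mul_sum]
        apply Finset.sum_congr rfl
        intro e _
        rw [Finset.sum_const, nsmul_eq_mul]
        congr 1
        rw [Finset.card_univ, Fintype.card_perm, Fintype.card_fin]
    _ = ∑ p ∈ Finset.powersetCard r V ×ˢ (Finset.univ : Finset (Equiv.Perm (Fin r))),
          ∏ v ∈ p.1, w v := by rw [Finset.sum_product]
    _ = ∑ p ∈ Finset.powersetCard r V ×ˢ (Finset.univ : Finset (Equiv.Perm (Fin r))),
          ∏ i : Fin r, w (Φ p i) := by
        apply Finset.sum_congr rfl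
        rintro ⟨e, σ⟩ hp
        obtain ⟨_, hcard⟩ := Finset.mem_powersetCard.1 (Finset.mem_product.1 hp).1
        exact (prod_unrk hcard w σ).symm
    _ = ∑ f ∈ (Finset.powersetCard r V ×ˢ
          (Finset.univ : Finset (Equiv.Perm (Fin r)))).image Φ,
          ∏ i : Fin r, w (f i) := by rw [Finset.sum_image hinj]
    _ ≤ ∑ f ∈ Fintype.piFinset (fun _ : Fin r => V), ∏ i : Fin r, w (f i) := by
        apply Finset.sum_le_sum_of_subset_of_nonneg
        · intro f hf
          obtain ⟨p, hp, rfl⟩ := Finset.mem_image.1 hf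
          exact hmaps p hp
        · intro f _ _
          exact Finset.prod_nonneg fun i _ => hw (f i)

theorem lagSet_le_inv_factorial {r : ℕ} {H : FinHypergraph} (hu : H.IsUniform r)
    {s : ℝ} (hs : s ∈ LagSet H) : (r.factorial : ℝ) * s ≤ 1 := by
  obtain ⟨w, hw, hsum, rfl⟩ := hs
  have h1 : ∑ e ∈ H.edges, ∏ v ∈ e, w v
      ≤ ∑ e ∈ Finset.powersetCard r H.verts, ∏ v ∈ e, w v := by
    apply Finset.sum_le_sum_of_subset_of_nonneg (edges_subset_powersetCard hu)
    intro e _ _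
    exact Finset.prod_nonneg fun v _ => hw v
  have h2 := esymm_bound r H.verts w hw
  rw [hsum, one_pow] at h2
  calc (r.factorial : ℝ) * ∑ e ∈ H.edges, ∏ v ∈ e, w v
      ≤ (r.factorial : ℝ) * ∑ e ∈ Finset.powersetCard r H.verts, ∏ v ∈ e, w v := by
        apply mul_le_mul_of_nonneg_left h1 (by positivity)
    _ ≤ 1 := h2

theorem blowupDensity_nonneg (r : ℕ) (H : FinHypergraph) : 0 ≤ blowupDensity r H := by
  unfold blowupDensity
  have := lagrangian_nonneg H
  positivity

theorem blowupDensity_le_one {r : ℕ} {H : FinHypergraph} (hu : H.IsUniform r) :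
    blowupDensity r H ≤ 1 := by
  unfold blowupDensity
  rcases Set.eq_empty_or_nonempty (LagSet H) with h | h
  · rw [lagrangian_def, h, Real.sSup_empty, mul_zero]; exact zero_le_one
  · rw [lagrangian_def]
    have hfac : (0 : ℝ) < r.factorial := by exact_mod_cast r.factorial_pos
    rw [mul_comm, ← le_div_iff₀ hfac]
    apply csSup_le h
    intro s hs
    rw [le_div_iff₀ hfac, mul_comm]
    exact lagSet_le_inv_factorial hu hs

def TSupSet (r : ℕ) (𝓕 : Set FinHypergraph) : Set ℝ :=
  {b : ℝ | ∃ H : FinHypergraph, H.IsUniform r ∧ H.HomFree 𝓕 ∧ b = blowupDensity r H}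

theorem supSet_bddAbove (r : ℕ) (𝓕 : Set FinHypergraph) : BddAbove (TSupSet r 𝓕) := by
  refine ⟨1, fun b hb => ?_⟩
  obtain ⟨H, hu, _, rfl⟩ := hb
  exact blowupDensity_le_one hu
/-! ### Blowup construction: direction sup ≤ π -/

section Blowup
variable (H : FinHypergraph) (sz : ℕ → ℕ)

def bstart (u : ℕ) : ℕ := ∑ u' ∈ H.verts.filter (fun x => x < u), sz u'

def bpart (u : ℕ) : Finset ℕ := Finset.Ico (bstart H sz u) (bstart H sz u + sz u)

variable {H sz}

theorem bpart_card (u : ℕ) : (bpart H sz u).card = sz u := by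
  simp [bpart]

theorem bpart_subset {n : ℕ} (htot : ∑ u ∈ H.verts, sz u ≤ n) {u : ℕ} (hu : u ∈ H.verts) :
    bpart H sz u ⊆ Finset.range n := by
  intro x hx
  rw [bpart, Finset.mem_Ico] at hx
  rw [Finset.mem_range]
  have h1 : bstart H sz u + sz u ≤ ∑ u' ∈ H.verts, sz u' := by
    have hins : insert u (H.verts.filter (fun x => x < u)) ⊆ H.verts := by
      intro y hy
      rcases Finset.mem_insert.1 hy with rfl | hy
      · exact hu
      · exact (Finset.mem_filter.1 hy).1
    calc bstart H sz u + sz u = ∑ u' ∈ insert u (H.verts.filter (fun x => x < u)), sz u' := by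
          rw [Finset.sum_insert (by simp), bstart, Nat.add_comm]
      _ ≤ ∑ u' ∈ H.verts, sz u' := Finset.sum_le_sum_of_subset hins
  omega

theorem bpart_disj {u u' : ℕ} (hu : u ∈ H.verts) (hu' : u' ∈ H.verts) (hne : u ≠ u') :
    ∀ x, x ∈ bpart H sz u → x ∈ bpart H sz u' → False := by
  have key : ∀ a b : ℕ, a ∈ H.verts → b ∈ H.verts → a < b →
      bstart H sz a + sz a ≤ bstart H sz b := by
    intro a b ha _ hab
    have hins : insert a (H.verts.filter (fun x => x < a)) ⊆ H.verts.filter (fun x => x < b) := by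
      intro y hy
      rcases Finset.mem_insert.1 hy with rfl | hy
      · exact Finset.mem_filter.2 ⟨ha, hab⟩
      · obtain ⟨h1, h2⟩ := Finset.mem_filter.1 hy
        exact Finset.mem_filter.2 ⟨h1, lt_trans h2 hab⟩
    calc bstart H sz a + sz a = ∑ u' ∈ insert a (H.verts.filter (fun x => x < a)), sz u' := by
          rw [Finset.sum_insert (by simp), bstart, Nat.add_comm]
      _ ≤ bstart H sz b := Finset.sum_le_sum_of_subset hins
  intro x hx hx'
  rw [bpart, Finset.mem_Ico] at hx hx'
  rcases Nat.lt_or_ge u u' with h | h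
  · have := key u u' hu hu' h; omega
  · have : u' < u := by omega
    have := key u' u hu' hu this; omega

noncomputable def bcol (H : FinHypergraph) (sz : ℕ → ℕ) (u₀ : ℕ) : ℕ → ℕ := fun x =>
  if h : (H.verts.filter (fun u => x ∈ bpart H sz u)).Nonempty
  then (H.verts.filter (fun u => x ∈ bpart H sz u)).min' h else u₀

theorem bcol_mem {u₀ : ℕ} (hu₀ : u₀ ∈ H.verts) (x : ℕ) : bcol H sz u₀ x ∈ H.verts := by
  rw [bcol]
  split
  · next h => exact (Finset.mem_filter.1 ((H.verts.filter _).min'_mem h)).1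
  · exact hu₀

theorem bcol_eq {u₀ : ℕ} {u x : ℕ} (hu : u ∈ H.verts) (hx : x ∈ bpart H sz u) :
    bcol H sz u₀ x = u := by
  have hne : (H.verts.filter (fun u => x ∈ bpart H sz u)).Nonempty :=
    ⟨u, Finset.mem_filter.2 ⟨hu, hx⟩⟩
  rw [bcol, dif_pos hne]
  have hmem := (H.verts.filter (fun u => x ∈ bpart H sz u)).min'_mem hne
  obtain ⟨h1, h2⟩ := Finset.mem_filter.1 hmem
  by_contra hcon
  exact bpart_disj h1 hu hcon _ h2 hx

noncomputable def blowupHG (H : FinHypergraph) (sz : ℕ → ℕ) (u₀ n r : ℕ) : FinHypergraph where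
  verts := Finset.range n
  edges := (Finset.powersetCard r (Finset.range n)).filter
    (fun S => Set.InjOn (bcol H sz u₀) ↑S ∧ S.image (bcol H sz u₀) ∈ H.edges)
  edge_sub := by
    intro e he
    exact (Finset.mem_powersetCard.1 (Finset.mem_filter.1 he).1).1

theorem blowupHG_uniform {u₀ n r : ℕ} : (blowupHG H sz u₀ n r).IsUniform r := by
  intro e he
  exact (Finset.mem_powersetCard.1 (Finset.mem_filter.1 he).1).2

theorem blowupHG_free {u₀ n r : ℕ} {𝓕 : Set FinHypergraph} (hu₀ : u₀ ∈ H.verts)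
    (hhf : H.HomFree 𝓕) : (blowupHG H sz u₀ n r).Free 𝓕 := by
  rintro F hF ⟨f, _, _, fe⟩
  apply hhf F hF (bcol H sz u₀ ∘ f)
  constructor
  · intro v _
    exact bcol_mem hu₀ (f v)
  · intro e he
    have h1 : e.image (bcol H sz u₀ ∘ f) = (e.image f).image (bcol H sz u₀) := by
      rw [Finset.image_image]
    rw [h1]
    exact (Finset.mem_filter.1 (fe e he)).2.2

theorem blowupHG_count {u₀ n r : ℕ} (hu : H.IsUniform r)
    (htot : ∑ u ∈ H.verts, sz u ≤ n) :
    ∑ e0 ∈ H.edges, ∏ u ∈ e0, sz u ≤ (blowupHG H sz u₀ n r).edges.card := by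
  classical
  have key : (H.edges.sigma (fun e0 => e0.pi (fun u => bpart H sz u))).card
      ≤ (blowupHG H sz u₀ n r).edges.card := by
    apply Finset.card_le_card_of_injOn
      (fun p => p.1.attach.image (fun a => p.2 a.1 a.2))
    · rintro ⟨e0, g⟩ hp
      rw [Finset.mem_coe, Finset.mem_sigma] at hp
      obtain ⟨he0, hg⟩ := hp
      have hgmem : ∀ (a : ℕ) (ha : a ∈ e0), g a ha ∈ bpart H sz a :=
        fun a ha => Finset.mem_pi.1 hg a ha
      have havert : ∀ a ∈ e0, a ∈ H.verts := fun a ha => H.edge_sub e0 he0 ha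
      have hinj2 : Set.InjOn (fun a : {x // x ∈ e0} => g a.1 a.2) ↑e0.attach := by
        intro a _ b _ hab
        by_contra hne
        have hne1 : a.1 ≠ b.1 := fun h => hne (Subtype.ext h)
        have hab' : g a.1 a.2 = g b.1 b.2 := hab
        exact bpart_disj (havert a.1 a.2) (havert b.1 b.2) hne1 _
          (hab' ▸ hgmem a.1 a.2) (hgmem b.1 b.2)
      have hcol : ∀ (a : ℕ) (ha : a ∈ e0), bcol H sz u₀ (g a ha) = a :=
        fun a ha => bcol_eq (havert a ha) (hgmem a ha)
      have himgcol : (e0.attach.image (fun a => g a.1 a.2)).image (bcol H sz u₀) = e0 := by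
        rw [Finset.image_image]
        have : ∀ a ∈ e0.attach, (bcol H sz u₀ ∘ fun a : {x // x ∈ e0} => g a.1 a.2) a = a.1 :=
          fun a _ => hcol a.1 a.2
        rw [Finset.image_congr this]
        exact Finset.attach_image_val
      simp only [Finset.mem_coe, blowupHG, Finset.mem_filter, Finset.mem_powersetCard]
      refine ⟨⟨?_, ?_⟩, ?_, ?_⟩
      · intro x hx
        obtain ⟨a, _, rfl⟩ := Finset.mem_image.1 hx
        exact bpart_subset htot (havert a.1 a.2) (hgmem a.1 a.2)
      · rw [Finset.card_image_of_injOn hinj2, Finset.card_attach]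
        exact hu e0 he0
      · intro x hx y hy hxy
        simp only [Finset.coe_image, Set.mem_image] at hx hy
        obtain ⟨a, _, rfl⟩ := hx
        obtain ⟨b, _, rfl⟩ := hy
        have ha' : bcol H sz u₀ (g a.1 a.2) = a.1 := hcol a.1 a.2
        have hb' : bcol H sz u₀ (g b.1 b.2) = b.1 := hcol b.1 b.2
        have : a.1 = b.1 := by rw [← ha', ← hb', hxy]
        rw [Subtype.ext this]
      · rw [himgcol]; exact he0
    · rintro ⟨e0, g⟩ hp ⟨e0', g'⟩ hp' heq
      simp only [Finset.mem_coe, Finset.mem_sigma] at hp hp'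
      dsimp only at heq
      have havert : ∀ a ∈ e0, a ∈ H.verts := fun a ha => H.edge_sub e0 hp.1 ha
      have havert' : ∀ a ∈ e0', a ∈ H.verts := fun a ha => H.edge_sub e0' hp'.1 ha
      have hgmem : ∀ (a : ℕ) (ha : a ∈ e0), g a ha ∈ bpart H sz a :=
        fun a ha => Finset.mem_pi.1 hp.2 a ha
      have hgmem' : ∀ (a : ℕ) (ha : a ∈ e0'), g' a ha ∈ bpart H sz a :=
        fun a ha => Finset.mem_pi.1 hp'.2 a ha
      have hcol : ∀ (a : ℕ) (ha : a ∈ e0), bcol H sz u₀ (g a ha) = a :=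
        fun a ha => bcol_eq (havert a ha) (hgmem a ha)
      have hcol' : ∀ (a : ℕ) (ha : a ∈ e0'), bcol H sz u₀ (g' a ha) = a :=
        fun a ha => bcol_eq (havert' a ha) (hgmem' a ha)
      have hee : e0 = e0' := by
        have h1 : (e0.attach.image (fun a => g a.1 a.2)).image (bcol H sz u₀) = e0 := by
          rw [Finset.image_image, Finset.image_congr (fun a _ => hcol a.1 a.2),
            Finset.attach_image_val]
        have h2 : (e0'.attach.image (fun a => g' a.1 a.2)).image (bcol H sz u₀) = e0' := by
          rw [Finset.image_image, Finset.image_congr (fun a _ => hcol' a.1 a.2),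
            Finset.attach_image_val]
        rw [← h1, ← h2, heq]
      subst hee
      have hgg : g = g' := by
        funext a ha
        have h1 : g a ha ∈ e0.attach.image (fun a => g' a.1 a.2) := by
          rw [← heq]
          exact Finset.mem_image.2 ⟨⟨a, ha⟩, Finset.mem_attach _ _, rfl⟩
        obtain ⟨b, _, hb⟩ := Finset.mem_image.1 h1
        have hab : b.1 = a := by
          rw [← hcol a ha, ← hb, hcol' b.1 b.2]
        subst hab
        rw [← hb]
      rw [hgg]
  calc ∑ e0 ∈ H.edges, ∏ u ∈ e0, sz u
      = (H.edges.sigma (fun e0 => e0.pi (fun u => bpart H sz u))).card := by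
        rw [Finset.card_sigma]
        apply Finset.sum_congr rfl
        intro e0 _
        rw [Finset.card_pi]
        exact Finset.prod_congr rfl (fun u _ => (bpart_card u).symm)
    _ ≤ _ := key
end Blowup
/-! ### Limits for direction C -/

open Filter

theorem tendsto_descFactorial (r : ℕ) :
    Tendsto (fun n : ℕ => (n.descFactorial r : ℝ) / (n : ℝ) ^ r) atTop (nhds 1) := by
  have h1 : Tendsto (fun n : ℕ => ∏ i ∈ Finset.range r, (1 - (i : ℝ) / n)) atTop
      (nhds (∏ i ∈ Finset.range r, (1 : ℝ))) := by
    apply tendsto_finset_prod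
    intro i _
    have := (tendsto_const_div_atTop_nhds_zero_nat (i : ℝ)).const_sub 1
    simpa using this
  rw [Finset.prod_const_one] at h1
  apply h1.congr'
  filter_upwards [eventually_ge_atTop r, eventually_ge_atTop 1] with n hnr hn1
  have hn0 : (n : ℝ) ≠ 0 := by positivity
  rw [Nat.descFactorial_eq_prod_range]
  have hcast : ((∏ i ∈ Finset.range r, (n - i) : ℕ) : ℝ)
      = ∏ i ∈ Finset.range r, ((n : ℝ) - i) := by
    rw [Nat.cast_prod]
    apply Finset.prod_congr rfl
    intro i hi
    rw [Nat.cast_sub (le_trans (le_of_lt (Finset.mem_range.1 hi)) hnr)]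
  rw [hcast]
  have hpow : (n : ℝ) ^ r = ∏ _i ∈ Finset.range r, (n : ℝ) := by
    rw [Finset.prod_const, Finset.card_range]
  rw [hpow, ← Finset.prod_div_distrib]
  apply Finset.prod_congr rfl
  intro i _
  rw [sub_div, div_self hn0]

theorem tendsto_pow_div_choose (r : ℕ) :
    Tendsto (fun n : ℕ => (n : ℝ) ^ r / (n.choose r : ℝ)) atTop
      (nhds (r.factorial : ℝ)) := by
  have h2 : Tendsto (fun n : ℕ => (r.factorial : ℝ) / ((n.descFactorial r : ℝ) / (n : ℝ) ^ r))
      atTop (nhds ((r.factorial : ℝ) / 1)) :=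
    tendsto_const_nhds.div (tendsto_descFactorial r) one_ne_zero
  rw [div_one] at h2
  apply h2.congr'
  filter_upwards [eventually_ge_atTop r, eventually_ge_atTop 1] with n hnr hn1
  have hn0 : (n : ℝ) ≠ 0 := by positivity
  have hC : (0 : ℝ) < (n.choose r : ℝ) := by exact_mod_cast Nat.choose_pos hnr
  have hfac : (0 : ℝ) < (r.factorial : ℝ) := by exact_mod_cast r.factorial_pos
  rw [Nat.descFactorial_eq_factorial_mul_choose]
  push_cast
  rw [eq_div_iff (by positivity)]
  field_simp

/-! ### Direction C -/

theorem lag_le_piLim {r : ℕ} {𝓕 : Set FinHypergraph} (hr : 2 ≤ r)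
    (hNE : ∀ F ∈ 𝓕, F.edges.Nonempty) {H : FinHypergraph}
    (hu : H.IsUniform r) (hhf : H.HomFree 𝓕) : blowupDensity r H ≤ piLim r 𝓕 := by
  rcases Finset.eq_empty_or_nonempty H.edges with hE | hE
  · have hlag : lagrangian H ≤ 0 := by
      apply Real.sSup_le _ le_rfl
      rintro s ⟨w, _, _, rfl⟩
      rw [hE, Finset.sum_empty]
    have hlag0 : lagrangian H = 0 := le_antisymm hlag (lagrangian_nonneg H)
    rw [blowupDensity, hlag0, mul_zero]
    exact piLim_nonneg r 𝓕
  · obtain ⟨e0, he0⟩ := hE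
    have he0ne : e0.Nonempty := by
      rw [← Finset.card_pos, hu e0 he0]; omega
    obtain ⟨u₀, hu₀e⟩ := he0ne
    have hu₀ : u₀ ∈ H.verts := H.edge_sub e0 he0 hu₀e
    have claim : ∀ a ∈ LagSet H, (r.factorial : ℝ) * a ≤ piLim r 𝓕 := by
      rintro a ⟨w, hw, hwsum, rfl⟩
      set a := ∑ e ∈ H.edges, ∏ v ∈ e, w v with ha
      have htot : ∀ n : ℕ, ∑ u ∈ H.verts, ⌊w u * n⌋₊ ≤ n := by
        intro n
        have hreal : ((∑ u ∈ H.verts, ⌊w u * n⌋₊ : ℕ) : ℝ) ≤ (n : ℝ) := by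
          rw [Nat.cast_sum]
          calc ∑ u ∈ H.verts, (⌊w u * n⌋₊ : ℝ) ≤ ∑ u ∈ H.verts, w u * n :=
                Finset.sum_le_sum (fun u _ => Nat.floor_le (mul_nonneg (hw u) (Nat.cast_nonneg n)))
            _ = (∑ u ∈ H.verts, w u) * n := by rw [Finset.sum_mul]
            _ = n := by rw [hwsum, one_mul]
        exact_mod_cast hreal
      have hcount : ∀ n : ℕ, (∑ e ∈ H.edges, ∏ u ∈ e, ⌊w u * n⌋₊) ≤ exNum r n 𝓕 := by
        intro n
        refine le_trans (blowupHG_count (u₀ := u₀) hu (htot n)) ?_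
        exact card_le_exNum rfl blowupHG_uniform (blowupHG_free hu₀ hhf)
      set q : ℕ → ℝ := fun n =>
        (∑ e ∈ H.edges, ∏ u ∈ e, (⌊w u * n⌋₊ : ℝ)) / (n.choose r : ℝ) with hq
      have hqle : ∀ᶠ n in atTop, q n ≤ aseq r 𝓕 n := by
        filter_upwards [eventually_ge_atTop r] with n hn
        have hC : (0 : ℝ) < (n.choose r : ℝ) := by exact_mod_cast Nat.choose_pos hn
        have hnum : (∑ e ∈ H.edges, ∏ u ∈ e, (⌊w u * n⌋₊ : ℝ)) ≤ (exNum r n 𝓕 : ℝ) := by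
          exact_mod_cast hcount n
        show (∑ e ∈ H.edges, ∏ u ∈ e, (⌊w u * n⌋₊ : ℝ)) / (n.choose r : ℝ)
            ≤ (exNum r n 𝓕 : ℝ) / (n.choose r : ℝ)
        gcongr
      have hfirst : Tendsto (fun n : ℕ => ∑ e ∈ H.edges, ∏ u ∈ e, ((⌊w u * n⌋₊ : ℝ) / n))
          atTop (nhds a) := by
        rw [ha]
        apply tendsto_finset_sum
        intro e _
        apply tendsto_finset_prod
        intro u _
        have h0 : Tendsto (fun x : ℝ => (⌊w u * x⌋₊ : ℝ) / x) atTop (nhds (w u)) :=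
          tendsto_nat_floor_mul_div_atTop (hw u)
        exact h0.comp tendsto_natCast_atTop_atTop
      have hmul := hfirst.mul (tendsto_pow_div_choose r)
      have htend : Tendsto q atTop (nhds ((r.factorial : ℝ) * a)) := by
        rw [mul_comm]
        apply hmul.congr'
        filter_upwards [eventually_ge_atTop r, eventually_ge_atTop 1] with n hnr hn1
        have hn0 : (n : ℝ) ≠ 0 := by positivity
        have hC : (n.choose r : ℝ) ≠ 0 := by
          have : 0 < n.choose r := Nat.choose_pos hnr
          positivity
        have hsum : ∑ e ∈ H.edges, ∏ u ∈ e, ((⌊w u * n⌋₊ : ℝ) / n)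
            = (∑ e ∈ H.edges, ∏ u ∈ e, (⌊w u * n⌋₊ : ℝ)) / (n : ℝ) ^ r := by
          rw [Finset.sum_div]
          apply Finset.sum_congr rfl
          intro e he
          rw [Finset.prod_div_distrib, Finset.prod_const, hu e he]
        show (∑ e ∈ H.edges, ∏ u ∈ e, ((⌊w u * n⌋₊ : ℝ) / n)) * ((n : ℝ) ^ r / (n.choose r : ℝ))
            = (∑ e ∈ H.edges, ∏ u ∈ e, (⌊w u * n⌋₊ : ℝ)) / (n.choose r : ℝ)
        rw [hsum]
        field_simp
        simp only [mul_comm (n : ℝ)]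
      exact le_of_tendsto_of_tendsto htend (aseq_tendsto hNE) hqle
    have hVne : H.verts.Nonempty := ⟨u₀, hu₀⟩
    have hLne : (LagSet H).Nonempty := ⟨_, uniform_weight_mem hu hVne⟩
    rw [blowupDensity, lagrangian_def]
    have hfac : (0 : ℝ) < (r.factorial : ℝ) := by exact_mod_cast r.factorial_pos
    rw [mul_comm, ← le_div_iff₀ hfac]
    apply csSup_le hLne
    intro s hs
    rw [le_div_iff₀ hfac, mul_comm]
    exact claim s hs

theorem tsup_le_piLim {r : ℕ} {𝓕 : Set FinHypergraph} (hr : 2 ≤ r)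
    (hNE : ∀ F ∈ 𝓕, F.edges.Nonempty) : sSup (TSupSet r 𝓕) ≤ piLim r 𝓕 := by
  apply Real.sSup_le _ (piLim_nonneg r 𝓕)
  rintro b ⟨H, hu, hhf, rfl⟩
  exact lag_le_piLim hr hNE hu hhf
/-! ### Erdős box theorem -/

theorem pow_le_descFactorial (k t : ℕ) : (k - t) ^ t ≤ k.descFactorial t := by
  rw [Nat.descFactorial_eq_prod_range]
  calc (k - t) ^ t = ∏ _i ∈ Finset.range t, (k - t) := by
        rw [Finset.prod_const, Finset.card_range]
    _ ≤ ∏ i ∈ Finset.range t, (k - i) := by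
        apply Finset.prod_le_prod' 
        intro i hi
        have := Finset.mem_range.1 hi
        omega

set_option maxHeartbeats 1000000 in
theorem box_theorem (t : ℕ) : ∀ (v : ℕ) (δ : ℝ), 0 < δ →
    ∃ N : ℕ, ∀ n : ℕ, N ≤ n → ∀ V : Finset ℕ, V.card = n →
    ∀ S : Finset (Fin v → ℕ), S ⊆ Fintype.piFinset (fun _ => V) →
    δ * (n : ℝ) ^ v ≤ (S.card : ℝ) →
    ∃ B : Fin v → Finset ℕ, (∀ i, B i ⊆ V ∧ t ≤ (B i).card) ∧
      ∀ f : Fin v → ℕ, (∀ i, f i ∈ B i) → f ∈ S := by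
  intro v
  induction v with
  | zero =>
    intro δ hδ
    refine ⟨0, fun n _ V hV S _ hcard => ?_⟩
    have hSne : S.Nonempty := by
      rw [← Finset.card_pos]
      by_contra h
      push_neg at h
      have : S.card = 0 := by omega
      rw [this] at hcard
      simp at hcard
      nlinarith
    obtain ⟨g, hg⟩ := hSne
    refine ⟨fun i => i.elim0, fun i => i.elim0, fun f _ => ?_⟩
    have : f = g := funext fun i => i.elim0
    rwa [this]
  | succ v ih =>
    intro δ hδ
    obtain ⟨N', hN'⟩ := ih ((δ / 4) ^ (t + 1)) (by positivity)
    refine ⟨N' + t + 1 + ⌈4 / δ⌉₊ + ⌈4 * (t : ℝ) / δ⌉₊, fun n hn V hV S hS hcard => ?_⟩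
    classical
    have hnN' : N' ≤ n := by omega
    have hnt : t ≤ n := by omega
    have hn1 : 1 ≤ n := by omega
    have hn0 : (0 : ℝ) < n := by exact_mod_cast hn1
    have hn4 : 4 / δ ≤ (n : ℝ) := by
      have h1 : (⌈4 / δ⌉₊ : ℝ) ≤ n := by exact_mod_cast by omega
      exact le_trans (Nat.le_ceil _) h1
    have hn4t : 4 * (t : ℝ) / δ ≤ (n : ℝ) := by
      have h1 : ⌈4 * (t : ℝ) / δ⌉₊ ≤ n := by omega
      exact le_trans (Nat.le_ceil _) (by exact_mod_cast h1)
    -- degree function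
    set d : (Fin v → ℕ) → ℕ := fun x => (V.filter (fun y => Fin.snoc x y ∈ S)).card with hd
    set k₀ : ℕ := ⌈δ / 2 * n⌉₊ with hk₀
    set PF : Finset (Fin v → ℕ) := Fintype.piFinset (fun _ => V) with hPF
    set X₀ : Finset (Fin v → ℕ) := PF.filter (fun x => k₀ ≤ d x) with hX₀
    have hPFcard : PF.card = n ^ v := by
      rw [hPF, Fintype.card_piFinset]
      simp [hV]
    -- decompose S.card
    have hdecomp : S.card = ∑ x ∈ PF, d x := by
      rw [Finset.card_eq_sum_card_fiberwise (f := fun s => Fin.init s) (t := PF)]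
      · apply Finset.sum_congr rfl
        intro x _
        rw [hd]
        refine Finset.card_bij' (fun s _ => s (Fin.last v)) (fun y _ => Fin.snoc x y)
          ?_ ?_ ?_ ?_
        · intro s hs
          obtain ⟨hs1, hs2⟩ := Finset.mem_filter.1 hs
          apply Finset.mem_filter.2
          subst hs2
          exact ⟨Fintype.mem_piFinset.1 (hS hs1) (Fin.last v), by
            rw [Fin.snoc_init_self]; exact hs1⟩
        · intro y hy
          obtain ⟨hy1, hy2⟩ := Finset.mem_filter.1 hy
          apply Finset.mem_filter.2
          exact ⟨hy2, by simp⟩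
        · intro s hs
          obtain ⟨_, hs2⟩ := Finset.mem_filter.1 hs
          subst hs2
          exact Fin.snoc_init_self s
        · intro y _
          simp
      · intro s hs
        rw [Finset.mem_coe, Fintype.mem_piFinset]
        intro i
        exact Fintype.mem_piFinset.1 (hS hs) i.castSucc
    -- X₀ is large
    have hk₀le : (k₀ : ℝ) ≤ δ / 2 * n + 1 := le_of_lt (Nat.ceil_lt_add_one (by positivity))
    have hSub : (S.card : ℝ) ≤ X₀.card * n + (n : ℝ) ^ v * k₀ := by
      have hsplit : ∑ x ∈ PF, d x
          = ∑ x ∈ X₀, d x + ∑ x ∈ PF.filter (fun x => ¬ k₀ ≤ d x), d x := by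
        rw [hX₀]
        rw [← Finset.sum_filter_add_sum_filter_not PF (fun x => k₀ ≤ d x)]
      have hb1 : ∑ x ∈ X₀, d x ≤ X₀.card * n := by
        apply Finset.sum_le_card_nsmul
        intro x _
        rw [hd]
        calc (V.filter (fun y => Fin.snoc x y ∈ S)).card ≤ V.card := Finset.card_filter_le _ _
          _ = n := hV
      have hb2 : ∑ x ∈ PF.filter (fun x => ¬ k₀ ≤ d x), d x ≤ n ^ v * k₀ := by
        calc ∑ x ∈ PF.filter (fun x => ¬ k₀ ≤ d x), d x
            ≤ (PF.filter (fun x => ¬ k₀ ≤ d x)).card * k₀ := by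
              apply Finset.sum_le_card_nsmul
              intro x hx
              have := (Finset.mem_filter.1 hx).2
              omega
          _ ≤ PF.card * k₀ :=
              Nat.mul_le_mul_right _ (Finset.card_le_card (Finset.filter_subset _ _))
          _ = n ^ v * k₀ := by rw [hPFcard]
      have : S.card ≤ X₀.card * n + n ^ v * k₀ := by
        rw [hdecomp, hsplit]; omega
      exact_mod_cast this
    have hX₀big : (δ / 4) * (n : ℝ) ^ v ≤ X₀.card := by
      have h1 : δ * (n : ℝ) ^ (v + 1) ≤ X₀.card * n + (n : ℝ) ^ v * (δ / 2 * n + 1) := by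
        calc δ * (n : ℝ) ^ (v + 1) ≤ (S.card : ℝ) := hcard
          _ ≤ X₀.card * n + (n : ℝ) ^ v * k₀ := hSub
          _ ≤ X₀.card * n + (n : ℝ) ^ v * (δ / 2 * n + 1) := by
              have : (0:ℝ) ≤ (n : ℝ) ^ v := by positivity
              nlinarith
      have h2 : (1 : ℝ) ≤ δ / 4 * n := by
        rw [div_le_iff₀ hδ] at hn4
        nlinarith
      have h3 : (δ / 4) * (n : ℝ) ^ v * n ≤ (X₀.card : ℝ) * n := by
        have hp : (0:ℝ) ≤ (n:ℝ)^v := by positivity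
        have : δ * (n:ℝ)^(v+1) = δ * (n:ℝ)^v * n := by ring
        nlinarith [pow_succ (n : ℝ) v]
      exact le_of_mul_le_mul_right h3 hn0
    -- the sets S_T
    set ST : Finset ℕ → Finset (Fin v → ℕ) :=
      fun T => PF.filter (fun x => ∀ y ∈ T, Fin.snoc x y ∈ S) with hST
    have hsumT : ∑ T ∈ Finset.powersetCard t V, (ST T).card
        = ∑ x ∈ PF, (d x).choose t := by
      have step1 : ∀ T ∈ Finset.powersetCard t V, (ST T).card
          = ∑ x ∈ PF, if (∀ y ∈ T, Fin.snoc x y ∈ S) then 1 else 0 := by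
        intro T _
        rw [hST, Finset.card_filter]
      rw [Finset.sum_congr rfl step1, Finset.sum_comm]
      apply Finset.sum_congr rfl
      intro x _
      have : ∑ T ∈ Finset.powersetCard t V, (if (∀ y ∈ T, Fin.snoc x y ∈ S) then 1 else 0)
          = ((Finset.powersetCard t V).filter (fun T => ∀ y ∈ T, Fin.snoc x y ∈ S)).card := by
        rw [Finset.card_filter]
      rw [this]
      have hEq : (Finset.powersetCard t V).filter (fun T => ∀ y ∈ T, Fin.snoc x y ∈ S)
          = Finset.powersetCard t (V.filter (fun y => Fin.snoc x y ∈ S)) := by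
        ext T
        simp only [Finset.mem_filter, Finset.mem_powersetCard]
        constructor
        · rintro ⟨⟨hTV, hTc⟩, hall⟩
          exact ⟨fun y hy => Finset.mem_filter.2 ⟨hTV hy, hall y hy⟩, hTc⟩
        · rintro ⟨hTf, hTc⟩
          exact ⟨⟨fun y hy => (Finset.mem_filter.1 (hTf hy)).1, hTc⟩,
            fun y hy => (Finset.mem_filter.1 (hTf hy)).2⟩
      rw [hEq, Finset.card_powersetCard]
    -- pick the best T
    have hpcne : (Finset.powersetCard t V).Nonempty := by
      rw [Finset.powersetCard_nonempty]
      rw [hV]; exact hnt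
    obtain ⟨T₀, hT₀mem, hT₀max⟩ := Finset.exists_max_image (Finset.powersetCard t V)
      (fun T => (ST T).card) hpcne
    have hchain : X₀.card * k₀.choose t ≤ n.choose t * (ST T₀).card := by
      calc X₀.card * k₀.choose t = ∑ _x ∈ X₀, k₀.choose t := by
            rw [Finset.sum_const, smul_eq_mul]
        _ ≤ ∑ x ∈ X₀, (d x).choose t := by
            apply Finset.sum_le_sum
            intro x hx
            exact Nat.choose_le_choose t (Finset.mem_filter.1 hx).2
        _ ≤ ∑ x ∈ PF, (d x).choose t := by
            apply Finset.sum_le_sum_of_subset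
            rw [hX₀]; exact Finset.filter_subset _ _
        _ = ∑ T ∈ Finset.powersetCard t V, (ST T).card := hsumT.symm
        _ ≤ ∑ _T ∈ Finset.powersetCard t V, (ST T₀).card :=
            Finset.sum_le_sum (fun T hT => hT₀max T hT)
        _ = (Finset.powersetCard t V).card * (ST T₀).card := by
            rw [Finset.sum_const, smul_eq_mul]
        _ = n.choose t * (ST T₀).card := by rw [Finset.card_powersetCard, hV]
    -- lower bound on ST T₀
    have htk₀ : t ≤ k₀ := by
      have h1 : (t : ℝ) ≤ δ / 2 * n := by
        rw [div_le_iff₀ hδ] at hn4t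
        nlinarith
      have := Nat.le_ceil (δ / 2 * n)
      have : (t : ℝ) ≤ (k₀ : ℝ) := le_trans h1 this
      exact_mod_cast this
    have hkt4 : δ / 4 * n ≤ ((k₀ - t : ℕ) : ℝ) := by
      rw [Nat.cast_sub htk₀]
      have h1 : δ / 2 * n ≤ (k₀ : ℝ) := Nat.le_ceil _
      have h2 : (t : ℝ) ≤ δ / 4 * n := by
        rw [div_le_iff₀ hδ] at hn4t
        nlinarith
      linarith
    have hSTbig : (δ / 4) ^ (t + 1) * (n : ℝ) ^ v ≤ ((ST T₀).card : ℝ) := by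
      have hCn : 0 < n.choose t := Nat.choose_pos hnt
      have hfacpos : (0:ℝ) < (t.factorial : ℝ) := by exact_mod_cast t.factorial_pos
      have hCpos : (0:ℝ) < (n.choose t : ℝ) * t.factorial := by
        have : (0:ℝ) < (n.choose t : ℝ) := by exact_mod_cast hCn
        positivity
      apply le_of_mul_le_mul_right _ hCpos
      -- goal : δ'n^v * (C(n,t)*t!) ≤ ST.card * (C(n,t)*t!)
      have hCnt : (n.choose t : ℝ) * t.factorial ≤ (n : ℝ) ^ t := by
        have h1 : n.choose t * t.factorial ≤ n ^ t := by
          have := Nat.descFactorial_le_pow n t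
          have h2 := Nat.descFactorial_eq_factorial_mul_choose n t
          calc n.choose t * t.factorial = t.factorial * n.choose t := Nat.mul_comm _ _
            _ = n.descFactorial t := h2.symm
            _ ≤ n ^ t := this
        exact_mod_cast h1
      have hCk : ((δ / 4) * n) ^ t ≤ (k₀.choose t : ℝ) * t.factorial := by
        have h1 : (k₀ - t) ^ t ≤ k₀.choose t * t.factorial := by
          calc (k₀ - t) ^ t ≤ k₀.descFactorial t := pow_le_descFactorial k₀ t
            _ = t.factorial * k₀.choose t := Nat.descFactorial_eq_factorial_mul_choose k₀ t
            _ = k₀.choose t * t.factorial := Nat.mul_comm _ _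
        have h2 : ((δ / 4) * n) ^ t ≤ (((k₀ - t : ℕ)) : ℝ) ^ t := by
          apply pow_le_pow_left₀ (by positivity) hkt4
        calc ((δ / 4) * n) ^ t ≤ (((k₀ - t : ℕ)) : ℝ) ^ t := h2
          _ ≤ (k₀.choose t : ℝ) * t.factorial := by exact_mod_cast h1
      have hchainR : (X₀.card : ℝ) * k₀.choose t ≤ (n.choose t : ℝ) * (ST T₀).card := by
        exact_mod_cast hchain
      calc (δ / 4) ^ (t + 1) * (n : ℝ) ^ v * ((n.choose t : ℝ) * t.factorial)
          ≤ (δ / 4) ^ (t + 1) * (n : ℝ) ^ v * (n : ℝ) ^ t := by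
            apply mul_le_mul_of_nonneg_left hCnt (by positivity)
        _ = ((δ / 4) * (n : ℝ) ^ v) * (((δ / 4) * n) ^ t) := by
            rw [mul_pow, pow_succ]; ring
        _ ≤ (X₀.card : ℝ) * ((k₀.choose t : ℝ) * t.factorial) := by
            apply mul_le_mul hX₀big hCk (by positivity) (by positivity)
        _ = ((X₀.card : ℝ) * k₀.choose t) * t.factorial := by ring
        _ ≤ ((n.choose t : ℝ) * (ST T₀).card) * t.factorial := by
            apply mul_le_mul_of_nonneg_right hchainR (by positivity)
        _ = ((ST T₀).card : ℝ) * ((n.choose t : ℝ) * t.factorial) := by ring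
    -- apply induction hypothesis
    obtain ⟨B₀, hB₀, hB₀mem⟩ := hN' n hnN' V hV (ST T₀)
      (by rw [hST]; exact Finset.filter_subset _ _) hSTbig
    refine ⟨Fin.snoc B₀ T₀, ?_, ?_⟩
    · intro i
      refine Fin.lastCases ?_ ?_ i
      · rw [Fin.snoc_last]
        obtain ⟨hT₀V, hT₀c⟩ := Finset.mem_powersetCard.1 hT₀mem
        exact ⟨hT₀V, le_of_eq hT₀c.symm⟩
      · intro j
        rw [Fin.snoc_castSucc]
        exact hB₀ j
    · intro f hf
      have hx : Fin.init f ∈ ST T₀ := by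
        apply hB₀mem
        intro i
        have := hf i.castSucc
        rwa [Fin.snoc_castSucc] at this
      have hlast : f (Fin.last v) ∈ T₀ := by
        have := hf (Fin.last v)
        rwa [Fin.snoc_last] at this
      have := (Finset.mem_filter.1 hx).2 (f (Fin.last v)) hlast
      rwa [Fin.snoc_init_self] at this
/-! ### Hom images and supersaturation prerequisites -/

def homImages (r : ℕ) (𝓕 : Set FinHypergraph) : Set FinHypergraph :=
  {F' | F'.IsUniform r ∧ ∃ F ∈ 𝓕, ∃ g : ℕ → ℕ, FinHypergraph.IsHom g F F' ∧
    F'.verts = F.verts.image g ∧ F'.edges = F.edges.image (Finset.image g)}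

theorem homImages_edges_nonempty {r : ℕ} {𝓕 : Set FinHypergraph}
    (hNE : ∀ F ∈ 𝓕, F.edges.Nonempty) :
    ∀ F' ∈ homImages r 𝓕, F'.edges.Nonempty := by
  rintro F' ⟨_, F, hF, g, _, _, hE⟩
  rw [hE]
  exact (hNE F hF).image _

theorem free_homImages_homFree {r : ℕ} {𝓕 : Set FinHypergraph} {G : FinHypergraph}
    (hGu : G.IsUniform r) (hfree : G.Free (homImages r 𝓕)) : G.HomFree 𝓕 := by
  intro F hF g hg
  have hsub : ∀ e' ∈ F.edges.image (Finset.image g), e' ⊆ F.verts.image g := by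
    intro e' he'
    obtain ⟨e, he, rfl⟩ := Finset.mem_image.1 he'
    exact Finset.image_subset_image (F.edge_sub e he)
  set F' : FinHypergraph := ⟨F.verts.image g, F.edges.image (Finset.image g), hsub⟩ with hF'
  have hF'u : F'.IsUniform r := by
    intro e' he'
    obtain ⟨e, he, rfl⟩ := Finset.mem_image.1 he'
    exact hGu _ (hg.2 e he)
  have hmem : F' ∈ homImages r 𝓕 := by
    refine ⟨hF'u, F, hF, g, ⟨?_, ?_⟩, rfl, rfl⟩
    · intro v hv
      exact Finset.mem_image_of_mem g hv
    · intro e he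
      exact Finset.mem_image_of_mem _ he
  apply hfree F' hmem
  refine ⟨id, Set.injOn_id _, ?_, ?_⟩
  · intro v hv
    obtain ⟨u, hu, rfl⟩ := Finset.mem_image.1 hv
    exact hg.1 u hu
  · intro e' he'
    rw [Finset.image_id]
    obtain ⟨e, he, rfl⟩ := Finset.mem_image.1 he'
    exact hg.2 e he

theorem zero_mem_supSet {r : ℕ} {𝓕 : Set FinHypergraph} (hr : 2 ≤ r)
    (hNE : ∀ F ∈ 𝓕, F.edges.Nonempty) : (0 : ℝ) ∈ TSupSet r 𝓕 := by
  refine ⟨emptyHG 0, by simp [emptyHG, FinHypergraph.IsUniform], ?_, ?_⟩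
  · intro F hF f hf
    obtain ⟨e, he⟩ := hNE F hF
    have := hf.2 e he
    simp [emptyHG] at this
  · have h1 : lagrangian (emptyHG 0) = 0 := by
      have : LagSet (emptyHG 0) = ∅ := by
        ext s
        simp only [LagSet, Set.mem_setOf_eq, Set.mem_empty_iff_false, iff_false]
        rintro ⟨w, _, hsum, _⟩
        rw [emptyHG] at hsum
        simp at hsum
      rw [lagrangian_def, this, Real.sSup_empty]
    rw [blowupDensity, h1, mul_zero]

theorem supSet_nonneg {r : ℕ} {𝓕 : Set FinHypergraph} (hr : 2 ≤ r)
    (hNE : ∀ F ∈ 𝓕, F.edges.Nonempty) : 0 ≤ sSup (TSupSet r 𝓕) :=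
  le_csSup (supSet_bddAbove r 𝓕) (zero_mem_supSet hr hNE)

theorem supSet_le_one {r : ℕ} {𝓕 : Set FinHypergraph} (hr : 2 ≤ r)
    (hNE : ∀ F ∈ 𝓕, F.edges.Nonempty) : sSup (TSupSet r 𝓕) ≤ 1 := by
  apply Real.sSup_le _ zero_le_one
  rintro b ⟨H, hu, _, rfl⟩
  exact blowupDensity_le_one hu

/-- D2 : the extremal numbers for the hom-image family are controlled by the sup. -/
theorem exNum_homImages_le {r : ℕ} {𝓕 : Set FinHypergraph} (hr : 2 ≤ r)
    (hNE : ∀ F ∈ 𝓕, F.edges.Nonempty) {m : ℕ} (hm : 1 ≤ m) :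
    (exNum r m (homImages r 𝓕) : ℝ) * (r.factorial : ℝ)
      ≤ sSup (TSupSet r 𝓕) * (m : ℝ) ^ r := by
  obtain ⟨G, hGv, hGu, hGfree, hGc⟩ := exNum_spec (r := r) (n := m)
    (homImages_edges_nonempty hNE)
  have hGhf : G.HomFree 𝓕 := free_homImages_homFree hGu hGfree
  have hbmem : blowupDensity r G ∈ TSupSet r 𝓕 := ⟨G, hGu, hGhf, rfl⟩
  have hble : blowupDensity r G ≤ sSup (TSupSet r 𝓕) :=
    le_csSup (supSet_bddAbove r 𝓕) hbmem
  have hVne : G.verts.Nonempty := by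
    rw [hGv]
    exact Finset.nonempty_range_iff.2 (by omega)
  have hlow := lagrangian_ge_uniform hGu hVne
  have hm0 : (0 : ℝ) < m := by exact_mod_cast hm
  have hVcard : (G.verts.card : ℝ) = m := by rw [hGv, Finset.card_range]
  have h1 : (G.edges.card : ℝ) * ((m : ℝ)⁻¹) ^ r ≤ lagrangian G := by
    rw [← hVcard]
    exact hlow
  have h2 : (r.factorial : ℝ) * ((G.edges.card : ℝ) * ((m : ℝ)⁻¹) ^ r)
      ≤ sSup (TSupSet r 𝓕) := by
    calc (r.factorial : ℝ) * ((G.edges.card : ℝ) * ((m : ℝ)⁻¹) ^ r)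
        ≤ (r.factorial : ℝ) * lagrangian G := by
          apply mul_le_mul_of_nonneg_left h1 (by positivity)
      _ = blowupDensity r G := rfl
      _ ≤ _ := hble
  have h3 : (G.edges.card : ℝ) * (r.factorial : ℝ)
      ≤ sSup (TSupSet r 𝓕) * (m : ℝ) ^ r := by
    have hmr : (0 : ℝ) < (m : ℝ) ^ r := by positivity
    rw [← mul_le_mul_iff_left₀ (show (0:ℝ) < ((m:ℝ)⁻¹)^r by positivity)]
    calc (G.edges.card : ℝ) * (r.factorial : ℝ) * ((m:ℝ)⁻¹)^r
        = (r.factorial : ℝ) * ((G.edges.card : ℝ) * ((m : ℝ)⁻¹) ^ r) := by ring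
      _ ≤ sSup (TSupSet r 𝓕) := h2
      _ = sSup (TSupSet r 𝓕) * ((m:ℝ)^r * ((m:ℝ)⁻¹)^r) := by
          rw [← mul_pow, mul_inv_cancel₀ (ne_of_gt hm0), one_pow, mul_one]
      _ = sSup (TSupSet r 𝓕) * (m:ℝ)^r * ((m:ℝ)⁻¹)^r := by ring
  rw [hGc] at h3
  exact h3

/-! ### counting supersets -/

theorem card_supersets {k m n : ℕ} {R : Finset ℕ} (hR : R ⊆ Finset.range n)
    (hcard : R.card = k) (hkm : k ≤ m) :
    ((Finset.powersetCard m (Finset.range n)).filter (fun T => R ⊆ T)).card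
      = (n - k).choose (m - k) := by
  have hcr : (Finset.range n \ R).card = n - k := by
    rw [Finset.card_sdiff_of_subset hR, Finset.card_range, hcard]
  rw [← hcr, ← Finset.card_powersetCard]
  apply Finset.card_nbij' (fun T => T \ R) (fun U => U ∪ R)
  · intro T hT
    obtain ⟨hT1, hT2⟩ := Finset.mem_filter.1 hT
    obtain ⟨hT3, hT4⟩ := Finset.mem_powersetCard.1 hT1
    apply Finset.mem_powersetCard.2
    constructor
    · exact Finset.sdiff_subset_sdiff hT3 le_rfl
    · rw [Finset.card_sdiff_of_subset hT2, hT4, hcard]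
  · intro U hU
    obtain ⟨hU1, hU2⟩ := Finset.mem_powersetCard.1 hU
    have hdisj : Disjoint U R := by
      apply Finset.disjoint_left.2
      intro a haU haR
      exact (Finset.mem_sdiff.1 (hU1 haU)).2 haR
    apply Finset.mem_filter.2
    constructor
    · apply Finset.mem_powersetCard.2
      constructor
      · apply Finset.union_subset _ hR
        intro a ha
        exact (Finset.mem_sdiff.1 (hU1 ha)).1
      · rw [Finset.card_union_of_disjoint hdisj, hU2, hcard]
        omega
    · exact Finset.subset_union_right
  · intro T hT
    exact Finset.sdiff_union_of_subset (Finset.mem_filter.1 hT).2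
  · intro U hU
    obtain ⟨hU1, _⟩ := Finset.mem_powersetCard.1 hU
    apply Finset.union_sdiff_cancel_right
    apply Finset.disjoint_left.2
    intro a haU haR
    exact (Finset.mem_sdiff.1 (hU1 haU)).2 haR

/-- Double counting edges over `m`-subsets. -/
theorem sum_induced_edges {r m n : ℕ} {G : FinHypergraph} (hGv : G.verts = Finset.range n)
    (hGu : G.IsUniform r) (hrm : r ≤ m) :
    ∑ T ∈ Finset.powersetCard m (Finset.range n), (G.edges.filter (fun e => e ⊆ T)).card
      = G.edges.card * (n - r).choose (m - r) := by
  have step : ∀ T ∈ Finset.powersetCard m (Finset.range n),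
      (G.edges.filter (fun e => e ⊆ T)).card = ∑ e ∈ G.edges, if e ⊆ T then 1 else 0 :=
    fun T _ => Finset.card_filter _ _
  rw [Finset.sum_congr rfl step, Finset.sum_comm, Finset.card_eq_sum_ones G.edges,
    Finset.sum_mul]
  apply Finset.sum_congr rfl
  intro e he
  have h1 : ∑ T ∈ Finset.powersetCard m (Finset.range n), (if e ⊆ T then 1 else 0)
      = ((Finset.powersetCard m (Finset.range n)).filter (fun T => e ⊆ T)).card :=
    (Finset.card_filter _ _).symm
  rw [h1, card_supersets (by rw [← hGv]; exact G.edge_sub e he) (hGu e he) hrm, one_mul]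
/-! ### From many copies of a hom-image to a copy of F -/

noncomputable def cmap (F' : FinHypergraph) (x : Fin F'.verts.card → ℕ) : ℕ → ℕ :=
  fun u => if h : u ∈ F'.verts then x ⟨rk F'.verts u, rk_lt h⟩ else 0

def IsCopyTup (F' G : FinHypergraph) (x : Fin F'.verts.card → ℕ) : Prop :=
  Set.InjOn (cmap F' x) ↑F'.verts ∧ (∀ u ∈ F'.verts, cmap F' x u ∈ G.verts) ∧
    ∀ e' ∈ F'.edges, e'.image (cmap F' x) ∈ G.edges

open Classical in
noncomputable def copySet (F' G : FinHypergraph) (n : ℕ) : Finset (Fin F'.verts.card → ℕ) :=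
  (Fintype.piFinset (fun _ : Fin F'.verts.card => Finset.range n)).filter
    (fun x => IsCopyTup F' G x)

theorem cmap_pos {F' : FinHypergraph} (x : Fin F'.verts.card → ℕ) {u : ℕ} (hu : u ∈ F'.verts) :
    cmap F' x u = x ⟨rk F'.verts u, rk_lt hu⟩ := dif_pos hu

theorem cmap_unrk {F' : FinHypergraph} (x : Fin F'.verts.card → ℕ) (i : Fin F'.verts.card) :
    cmap F' x (unrk F'.verts i) = x i := by
  have hu : unrk F'.verts i ∈ F'.verts := unrk_mem i.isLt
  rw [cmap_pos x hu]
  congr 1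
  apply Fin.ext
  exact rk_unrk _ i.isLt

theorem exists_injOn_of_card_le {s B : Finset ℕ} (h : s.card ≤ B.card) :
    ∃ f : ℕ → ℕ, Set.InjOn f ↑s ∧ ∀ v ∈ s, f v ∈ B := by
  classical
  have h' : Fintype.card {x // x ∈ s} ≤ Fintype.card {x // x ∈ B} := by
    simpa [Fintype.card_coe] using h
  obtain ⟨e⟩ := Function.Embedding.nonempty_of_card_le h'
  refine ⟨fun v => if h : v ∈ s then (e ⟨v, h⟩ : ℕ) else 0, ?_, ?_⟩
  · intro a ha b hb hab
    rw [Finset.mem_coe] at ha hb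
    simp only [dif_pos ha, dif_pos hb] at hab
    have := e.injective (Subtype.ext hab)
    simpa using congrArg Subtype.val this
  · intro v hv
    dsimp only
    rw [dif_pos hv]
    exact (e ⟨v, hv⟩).2

theorem copies_give_copy {r : ℕ} (hr : 2 ≤ r) {F F' : FinHypergraph} {g : ℕ → ℕ}
    (hg : FinHypergraph.IsHom g F F') (hFu : F.IsUniform r) (hF'u : F'.IsUniform r)
    (hFne : F.edges.Nonempty) {δ : ℝ} (hδ : 0 < δ) :
    ∃ N : ℕ, ∀ n, N ≤ n → ∀ G : FinHypergraph, G.verts = Finset.range n →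
      δ * (n : ℝ) ^ (F'.verts.card) ≤ ((copySet F' G n).card : ℝ) →
      F.ContainsCopy G := by
  classical
  obtain ⟨N, hN⟩ := box_theorem F.verts.card F'.verts.card δ hδ
  refine ⟨N, fun n hn G hGv hbig => ?_⟩
  obtain ⟨B, hB, hBmem⟩ := hN n hn (Finset.range n) (Finset.card_range n) (copySet F' G n)
    (Finset.filter_subset _ _) hbig
  have hF'ne : F'.edges.Nonempty := by
    obtain ⟨e, he⟩ := hFne; exact ⟨e.image g, hg.2 e he⟩
  have hv'r : r ≤ F'.verts.card := by
    obtain ⟨e', he'⟩ := hF'ne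
    calc r = e'.card := (hF'u e' he').symm
      _ ≤ F'.verts.card := Finset.card_le_card (F'.edge_sub e' he')
  have htr : r ≤ F.verts.card := by
    obtain ⟨e, he⟩ := hFne
    calc r = e.card := (hFu e he).symm
      _ ≤ _ := Finset.card_le_card (F.edge_sub e he)
  have hBne : ∀ i, (B i).Nonempty := by
    intro i
    rw [← Finset.card_pos]
    have := (hB i).2
    omega
  choose bdef hbdef using hBne
  have hbox : ∀ x : Fin F'.verts.card → ℕ, (∀ i, x i ∈ B i) → IsCopyTup F' G x :=
    fun x hx => (Finset.mem_filter.1 (hBmem x hx)).2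
  -- the boxes are pairwise disjoint
  have hdisj : ∀ i j : Fin F'.verts.card, i ≠ j → ∀ z, z ∈ B i → z ∈ B j → False := by
    intro i j hij z hzi hzj
    set x : Fin F'.verts.card → ℕ := fun k => if k = i ∨ k = j then z else bdef k with hx
    have hxbox : ∀ k, x k ∈ B k := by
      intro k
      rw [hx]
      dsimp only
      split
      · next h =>
          rcases h with rfl | rfl
          · exact hzi
          · exact hzj
      · exact hbdef k
    have hcopy := hbox x hxbox
    have hui : unrk F'.verts i ∈ F'.verts := unrk_mem i.isLt
    have huj : unrk F'.verts j ∈ F'.verts := unrk_mem j.isLt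
    have hxi : x i = z := by rw [hx]; dsimp only; rw [if_pos (Or.inl rfl)]
    have hxj : x j = z := by rw [hx]; dsimp only; rw [if_pos (Or.inr rfl)]
    have heq : unrk F'.verts i = unrk F'.verts j := by
      apply hcopy.1 (by exact hui) (by exact huj)
      rw [cmap_unrk, cmap_unrk, hxi, hxj]
    apply hij
    apply Fin.ext
    exact unrk_injOn (Finset.mem_coe.2 (Finset.mem_range.2 i.isLt))
      (Finset.mem_coe.2 (Finset.mem_range.2 j.isLt)) heq
  have hgv : ∀ v ∈ F.verts, g v ∈ F'.verts := hg.1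
  set idx : ℕ → Fin F'.verts.card := fun u =>
    if h : u ∈ F'.verts then ⟨rk F'.verts u, rk_lt h⟩ else ⟨0, by omega⟩ with hidx
  have hembex : ∀ u : ℕ, ∃ f : ℕ → ℕ,
      Set.InjOn f ↑(F.verts.filter (fun v => g v = u)) ∧
      ∀ v ∈ F.verts.filter (fun v => g v = u), f v ∈ B (idx u) := by
    intro u
    apply exists_injOn_of_card_le
    calc (F.verts.filter (fun v => g v = u)).card ≤ F.verts.card :=
          Finset.card_filter_le _ _
      _ ≤ (B (idx u)).card := (hB (idx u)).2
  choose emb hembinj hembmem using hembex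
  set ℓ : ℕ → ℕ := fun v => emb (g v) v with hℓ
  have hℓmem : ∀ v ∈ F.verts, ℓ v ∈ B (idx (g v)) := by
    intro v hv
    exact hembmem (g v) v (Finset.mem_filter.2 ⟨hv, rfl⟩)
  have hidxinj : ∀ u1 ∈ F'.verts, ∀ u2 ∈ F'.verts, idx u1 = idx u2 → u1 = u2 := by
    intro u1 h1 u2 h2 h
    rw [hidx] at h
    dsimp only at h
    rw [dif_pos h1, dif_pos h2] at h
    exact rk_injOn h1 h2 (congrArg Fin.val h)
  have hℓinj : Set.InjOn ℓ ↑F.verts := by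
    intro a ha b hb hab
    rw [Finset.mem_coe] at ha hb
    rcases eq_or_ne (g a) (g b) with hgab | hgab
    · apply hembinj (g a) (Finset.mem_coe.2 (Finset.mem_filter.2 ⟨ha, rfl⟩))
        (Finset.mem_coe.2 (Finset.mem_filter.2 ⟨hb, hgab.symm⟩))
      show emb (g a) a = emb (g a) b
      have heb : emb (g a) b = emb (g b) b := by rw [hgab]
      rw [heb]
      exact hab
    · exfalso
      have hia : ℓ a ∈ B (idx (g a)) := hℓmem a ha
      have hib : ℓ a ∈ B (idx (g b)) := by rw [hab]; exact hℓmem b hb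
      have hne : idx (g a) ≠ idx (g b) := by
        intro h
        exact hgab (hidxinj _ (hgv a ha) _ (hgv b hb) h)
      exact hdisj _ _ hne (ℓ a) hia hib
  have hedge : ∀ e ∈ F.edges, e.image ℓ ∈ G.edges := by
    intro e he
    have he' : e.image g ∈ F'.edges := hg.2 e he
    have hginj : Set.InjOn g ↑e := by
      apply Finset.injOn_of_card_image_eq
      rw [hF'u _ he', hFu e he]
    set x : Fin F'.verts.card → ℕ := fun i =>
      if h : (e.filter (fun v => g v = unrk F'.verts i)).Nonempty then ℓ h.choose
      else bdef i with hx
    have hesub : ∀ v ∈ e, v ∈ F.verts := fun v hv => F.edge_sub e he hv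
    have hxbox : ∀ i, x i ∈ B i := by
      intro i
      rw [hx]
      dsimp only
      split
      · next h =>
        obtain ⟨hch1, hch2⟩ := Finset.mem_filter.1 h.choose_spec
        have hidxeq : idx (g h.choose) = i := by
          rw [hch2, hidx]
          dsimp only
          rw [dif_pos (unrk_mem i.isLt)]
          apply Fin.ext
          exact rk_unrk _ i.isLt
        have := hℓmem h.choose (hesub _ hch1)
        rwa [hidxeq] at this
      · exact hbdef i
    have hcopy := hbox x hxbox
    have hcvalue : ∀ v ∈ e, cmap F' x (g v) = ℓ v := by
      intro v hv
      have hu' : g v ∈ F'.verts := F'.edge_sub _ he' (Finset.mem_image_of_mem g hv)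
      rw [cmap_pos x hu']
      set i₀ : Fin F'.verts.card := ⟨rk F'.verts (g v), rk_lt hu'⟩ with hi₀
      have hunrk : unrk F'.verts i₀ = g v := unrk_rk _ hu'
      have hne2 : (e.filter (fun w => g w = unrk F'.verts i₀)).Nonempty :=
        ⟨v, Finset.mem_filter.2 ⟨hv, by rw [hunrk]⟩⟩
      have hval : x i₀ = ℓ hne2.choose := by
        rw [hx]
        dsimp only
        rw [dif_pos hne2]
      obtain ⟨hch1, hch2⟩ := Finset.mem_filter.1 hne2.choose_spec
      have hchv : hne2.choose = v := hginj (Finset.mem_coe.2 hch1) (Finset.mem_coe.2 hv)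
        (by rw [hch2, hunrk])
      rw [hval, hchv]
    have hkey : (e.image g).image (cmap F' x) = e.image ℓ := by
      ext y
      simp only [Finset.mem_image]
      constructor
      · rintro ⟨u, hu, rfl⟩
        obtain ⟨v, hv, rfl⟩ := hu
        exact ⟨v, hv, (hcvalue v hv).symm⟩
      · rintro ⟨v, hv, rfl⟩
        exact ⟨g v, ⟨v, hv, rfl⟩, hcvalue v hv⟩
    have := hcopy.2.2 (e.image g) he'
    rwa [hkey] at this
  refine ⟨ℓ, hℓinj, ?_, hedge⟩
  intro v hv
  rw [hGv]
  exact (hB (idx (g v))).1 (hℓmem v hv)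
/-! ### per-pattern lemma -/

def mkW (m : ℕ) (E₀ : Finset (Finset ℕ)) : FinHypergraph :=
  ⟨Finset.range m, E₀.filter (fun e => e ⊆ Finset.range m),
    fun e he => (Finset.mem_filter.1 he).2⟩

set_option maxHeartbeats 1000000 in
theorem perE_lemma {r m : ℕ} {𝓕 : Set FinHypergraph} (hr : 2 ≤ r)
    (h𝓕 : ∀ F ∈ 𝓕, F.IsUniform r) (hNE : ∀ F ∈ 𝓕, F.edges.Nonempty)
    (hrm : r ≤ m) {ε : ℝ} (hε : 0 < ε) (E₀ : Finset (Finset ℕ))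
    (hbad : ¬ (FinHypergraph.Free (homImages r 𝓕) (mkW m E₀))) :
    ∃ N : ℕ, ∀ n, N ≤ n → ∀ G : FinHypergraph, G.verts = Finset.range n → G.Free 𝓕 →
      ¬ (ε * ((n.choose m : ℕ) : ℝ) ≤
        (((Finset.powersetCard m (Finset.range n)).filter
          (fun T => (G.edges.filter (fun e => e ⊆ T)).image (Finset.image (rk T))
            = E₀)).card : ℝ)) := by
  classical
  unfold FinHypergraph.Free at hbad
  push_neg at hbad
  obtain ⟨F', hF'mem, hcopy⟩ := hbad
  obtain ⟨φ, hφinj, hφv, hφe⟩ := hcopy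
  obtain ⟨hF'u, F, hFmem, g, hg, hFverts, hFedges⟩ := hF'mem
  have hFu : F.IsUniform r := h𝓕 F hFmem
  have hFne : F.edges.Nonempty := hNE F hFmem
  set v' := F'.verts.card with hv'
  have hF'ne : F'.edges.Nonempty := by
    obtain ⟨e, he⟩ := hFne
    exact ⟨e.image g, hg.2 e he⟩
  have hv'r : r ≤ v' := by
    obtain ⟨e', he'⟩ := hF'ne
    calc r = e'.card := (hF'u e' he').symm
      _ ≤ F'.verts.card := Finset.card_le_card (F'.edge_sub e' he')
  have hv'm : v' ≤ m := by
    have h1 : (F'.verts.image φ).card = F'.verts.card := Finset.card_image_of_injOn hφinj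
    have h2 : F'.verts.image φ ⊆ Finset.range m := by
      intro y hy
      obtain ⟨u, hu, rfl⟩ := Finset.mem_image.1 hy
      exact hφv u hu
    calc v' = (F'.verts.image φ).card := h1.symm
      _ ≤ (Finset.range m).card := Finset.card_le_card h2
      _ = m := Finset.card_range m
  set P : ℝ := 2 ^ v' * (v'.factorial : ℝ) * (m.choose v' : ℝ) with hP
  have hPpos : 0 < P := by
    have : 0 < m.choose v' := Nat.choose_pos hv'm
    have h2 : (0:ℝ) < (m.choose v' : ℝ) := by exact_mod_cast this
    have h3 : (0:ℝ) < (v'.factorial : ℝ) := by exact_mod_cast v'.factorial_pos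
    positivity
  set δ : ℝ := ε / P with hδdef
  have hδpos : 0 < δ := by positivity
  obtain ⟨N₁, hN₁⟩ := copies_give_copy hr hg hFu hF'u hFne hδpos
  refine ⟨max N₁ (max m (2 * v')), fun n hn G hGv hGfree hfib => ?_⟩
  have hnN₁ : N₁ ≤ n := le_trans (le_max_left _ _) hn
  have hnm : m ≤ n := le_trans (le_trans (le_max_left _ _) (le_max_right _ _)) hn
  have hn2v : 2 * v' ≤ n := le_trans (le_trans (le_max_right _ _) (le_max_right _ _)) hn
  set fib := (Finset.powersetCard m (Finset.range n)).filter
    (fun T => (G.edges.filter (fun e => e ⊆ T)).image (Finset.image (rk T)) = E₀) with hfibdef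
  -- the tuple associated to a subset T
  set Θ : Finset ℕ → (Fin v' → ℕ) :=
    fun T => fun i => unrk T (φ (unrk F'.verts i)) with hΘ
  have hTfacts : ∀ T ∈ fib, T ⊆ Finset.range n ∧ T.card = m := by
    intro T hT
    have := (Finset.mem_filter.1 hT).1
    exact Finset.mem_powersetCard.1 this
  -- each T ∈ fib gives a copy tuple
  have hmapsto : ∀ T ∈ fib, Θ T ∈ copySet F' G n := by
    intro T hT
    obtain ⟨hT1, hT2⟩ := hTfacts T hT
    have hTE := (Finset.mem_filter.1 hT).2
    have hcval : ∀ u ∈ F'.verts, unrk T (φ u) ∈ T := by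
      intro u hu
      apply unrk_mem
      rw [hT2]
      exact Finset.mem_range.1 (hφv u hu)
    have hcinj : ∀ u1 ∈ F'.verts, ∀ u2 ∈ F'.verts,
        unrk T (φ u1) = unrk T (φ u2) → u1 = u2 := by
      intro u1 h1 u2 h2 heq
      apply hφinj (Finset.mem_coe.2 h1) (Finset.mem_coe.2 h2)
      apply unrk_injOn _ _ heq
      · rw [Finset.coe_range, Set.mem_Iio, hT2]
        exact Finset.mem_range.1 (hφv u1 h1)
      · rw [Finset.coe_range, Set.mem_Iio, hT2]
        exact Finset.mem_range.1 (hφv u2 h2)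
    have hagree : ∀ u ∈ F'.verts, cmap F' (Θ T) u = unrk T (φ u) := by
      intro u hu
      rw [cmap_pos _ hu]
      rw [hΘ]
      dsimp only
      rw [unrk_rk u hu]
    have hedges : ∀ e' ∈ F'.edges, e'.image (fun u => unrk T (φ u)) ∈ G.edges := by
      intro e' he'
      have h1 : e'.image φ ∈ (mkW m E₀).edges := hφe e' he'
      have h2 : e'.image φ ∈ E₀ := (Finset.mem_filter.1 h1).1
      rw [← hTE] at h2
      obtain ⟨eG, heG, heq⟩ := Finset.mem_image.1 h2
      obtain ⟨heG1, heG2⟩ := Finset.mem_filter.1 heG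
      have h3 : (e'.image φ).image (unrk T) = eG := by
        rw [← heq, image_image_of_inv unrk_rk heG2]
      have h4 : e'.image (fun u => unrk T (φ u)) = (e'.image φ).image (unrk T) := by
        rw [Finset.image_image]
        rfl
      rw [h4, h3]
      exact heG1
    rw [copySet, Finset.mem_filter]
    constructor
    · rw [Fintype.mem_piFinset]
      intro i
      have hui : unrk F'.verts i ∈ F'.verts := unrk_mem i.isLt
      have := hcval _ hui
      exact hT1 this
    · refine ⟨?_, ?_, ?_⟩
      · intro u1 h1 u2 h2 heq
        rw [Finset.mem_coe] at h1 h2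
        rw [hagree u1 h1, hagree u2 h2] at heq
        exact hcinj u1 h1 u2 h2 heq
      · intro u hu
        rw [hagree u hu, hGv]
        exact hT1 (hcval u hu)
      · intro e' he'
        have himg : e'.image (cmap F' (Θ T)) = e'.image (fun u => unrk T (φ u)) := by
          apply Finset.image_congr
          intro u hu
          exact hagree u (F'.edge_sub e' he' hu)
        rw [himg]
        exact hedges e' he'
  -- counting: fib.card ≤ copySet.card * D
  set D := (n - v').choose (m - v') with hD
  have hcount : fib.card ≤ (copySet F' G n).card * D := by
    rw [Finset.card_eq_sum_card_fiberwise hmapsto]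
    apply Finset.sum_le_card_nsmul
    intro x hx
    have hxsub : fib.filter (fun T => Θ T = x)
        ⊆ (Finset.powersetCard m (Finset.range n)).filter
          (fun T => Finset.image x Finset.univ ⊆ T) := by
      intro T hT
      obtain ⟨hT1, hT2⟩ := Finset.mem_filter.1 hT
      apply Finset.mem_filter.2
      refine ⟨(Finset.mem_filter.1 hT1).1, ?_⟩
      intro y hy
      obtain ⟨i, _, rfl⟩ := Finset.mem_image.1 hy
      rw [← hT2]
      obtain ⟨hTa, hTb⟩ := hTfacts T hT1
      have hui : unrk F'.verts i ∈ F'.verts := unrk_mem i.isLt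
      apply unrk_mem
      rw [hTb]
      exact Finset.mem_range.1 (hφv _ hui)
    -- x is injective
    have hxcs := Finset.mem_filter.1 hx
    have hxinj : Function.Injective x := by
      intro i j hij
      have h1 := hxcs.2.1
      have hui : unrk F'.verts i ∈ F'.verts := unrk_mem i.isLt
      have huj : unrk F'.verts j ∈ F'.verts := unrk_mem j.isLt
      have heq : unrk F'.verts i = unrk F'.verts j := by
        apply h1 (Finset.mem_coe.2 hui) (Finset.mem_coe.2 huj)
        rw [cmap_unrk, cmap_unrk, hij]
      apply Fin.ext
      exact unrk_injOn (by rw [Finset.coe_range, Set.mem_Iio]; exact i.isLt)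
        (by rw [Finset.coe_range, Set.mem_Iio]; exact j.isLt) heq
    have hRsub : Finset.image x Finset.univ ⊆ Finset.range n := by
      intro y hy
      obtain ⟨i, _, rfl⟩ := Finset.mem_image.1 hy
      exact Fintype.mem_piFinset.1 hxcs.1 i
    have hRcard : (Finset.image x Finset.univ).card = v' := by
      rw [Finset.card_image_of_injective _ hxinj, Finset.card_univ, Fintype.card_fin]
    calc (fib.filter (fun T => Θ T = x)).card
        ≤ ((Finset.powersetCard m (Finset.range n)).filter
            (fun T => Finset.image x Finset.univ ⊆ T)).card := Finset.card_le_card hxsub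
      _ = D := card_supersets hRsub hRcard hv'm
  -- real arithmetic
  have hDpos : 0 < D := Nat.choose_pos (by omega)
  have hident : n.choose m * m.choose v' = n.choose v' * D :=
    Nat.choose_mul hv'm
  have hstep1 : ε * (n.choose v' : ℝ) ≤ ((copySet F' G n).card : ℝ) * (m.choose v' : ℝ) := by
    have hDR : (0:ℝ) < (D : ℝ) := by exact_mod_cast hDpos
    apply le_of_mul_le_mul_right _ hDR
    calc ε * (n.choose v' : ℝ) * D = ε * ((n.choose v' : ℝ) * D) := by ring
      _ = ε * ((n.choose m : ℝ) * (m.choose v' : ℝ)) := by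
          congr 1
          rw [← Nat.cast_mul, ← Nat.cast_mul, hident]
      _ = (ε * (n.choose m : ℝ)) * (m.choose v' : ℝ) := by ring
      _ ≤ (fib.card : ℝ) * (m.choose v' : ℝ) := by
          apply mul_le_mul_of_nonneg_right hfib (by positivity)
      _ ≤ ((copySet F' G n).card : ℝ) * D * (m.choose v' : ℝ) := by
          apply mul_le_mul_of_nonneg_right _ (by positivity)
          have : (fib.card : ℝ) ≤ ((copySet F' G n).card * D : ℕ) := by exact_mod_cast hcount
          rwa [Nat.cast_mul] at this
      _ = ((copySet F' G n).card : ℝ) * (m.choose v' : ℝ) * D := by ring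
  have hA : (n : ℝ) ^ v' ≤ 2 ^ v' * ((n.choose v' : ℝ) * (v'.factorial : ℝ)) := by
    have h1 : n ≤ 2 * (n - v') := by omega
    have h2 : (n : ℝ) ^ v' ≤ (2 * ((n - v' : ℕ) : ℝ)) ^ v' := by
      apply pow_le_pow_left₀ (by positivity)
      have : ((n : ℕ) : ℝ) ≤ ((2 * (n - v') : ℕ) : ℝ) := by exact_mod_cast h1
      rwa [Nat.cast_mul, Nat.cast_ofNat] at this
    have h3 : ((n - v' : ℕ) : ℝ) ^ v' ≤ (n.choose v' : ℝ) * (v'.factorial : ℝ) := by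
      have hnat : (n - v') ^ v' ≤ n.choose v' * v'.factorial := by
        calc (n - v') ^ v' ≤ n.descFactorial v' := pow_le_descFactorial n v'
          _ = v'.factorial * n.choose v' := Nat.descFactorial_eq_factorial_mul_choose n v'
          _ = n.choose v' * v'.factorial := Nat.mul_comm _ _
      exact_mod_cast hnat
    calc (n : ℝ) ^ v' ≤ (2 * ((n - v' : ℕ) : ℝ)) ^ v' := h2
      _ = 2 ^ v' * ((n - v' : ℕ) : ℝ) ^ v' := by rw [mul_pow]
      _ ≤ 2 ^ v' * ((n.choose v' : ℝ) * (v'.factorial : ℝ)) := by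
          apply mul_le_mul_of_nonneg_left h3 (by positivity)
  have hfinal : δ * (n : ℝ) ^ v' ≤ ((copySet F' G n).card : ℝ) := by
    rw [hδdef, div_mul_eq_mul_div, div_le_iff₀ hPpos]
    calc ε * (n : ℝ) ^ v' ≤ ε * (2 ^ v' * ((n.choose v' : ℝ) * (v'.factorial : ℝ))) := by
          apply mul_le_mul_of_nonneg_left hA (le_of_lt hε)
      _ = (ε * (n.choose v' : ℝ)) * (2 ^ v' * (v'.factorial : ℝ)) := by ring
      _ ≤ (((copySet F' G n).card : ℝ) * (m.choose v' : ℝ)) * (2 ^ v' * (v'.factorial : ℝ)) := by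
          apply mul_le_mul_of_nonneg_right hstep1 (by positivity)
      _ = ((copySet F' G n).card : ℝ) * P := by rw [hP]; ring
  have := hN₁ n hnN₁ G hGv hfinal
  exact hGfree F hFmem this
/-! ### Main supersaturation -/

set_option maxHeartbeats 1000000 in
theorem aseq_eventually_le {r : ℕ} {𝓕 : Set FinHypergraph} (hr : 2 ≤ r)
    (h𝓕 : ∀ F ∈ 𝓕, F.IsUniform r) (hNE : ∀ F ∈ 𝓕, F.edges.Nonempty)
    {ε : ℝ} (hε : 0 < ε) :
    ∃ n, r ≤ n ∧ aseq r 𝓕 n ≤ sSup (TSupSet r 𝓕) + ε := by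
  classical
  set s := sSup (TSupSet r 𝓕) with hs
  have hs0 : 0 ≤ s := supSet_nonneg hr hNE
  have hs1 : s ≤ 1 := supSet_le_one hr hNE
  have hfacpos : (0:ℝ) < (r.factorial : ℝ) := by exact_mod_cast r.factorial_pos
  -- choose m
  have hmex : ∃ m : ℕ, r ≤ m ∧
      (m : ℝ) ^ r / (m.choose r : ℝ) < (r.factorial : ℝ) * (1 + ε / 2) := by
    have hlt : (r.factorial : ℝ) < (r.factorial : ℝ) * (1 + ε / 2) := by nlinarith
    have h1 := (tendsto_pow_div_choose r).eventually_lt_const hlt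
    exact ((Filter.eventually_ge_atTop r).and h1).exists
  obtain ⟨m, hrm, hmb⟩ := hmex
  have hm1 : 1 ≤ m := le_trans (by omega) hrm
  have hCmr : (0:ℝ) < (m.choose r : ℝ) := by exact_mod_cast Nat.choose_pos hrm
  set tstar := exNum r m (homImages r 𝓕) with htstar
  have htb : (tstar : ℝ) ≤ (s + ε / 2) * (m.choose r : ℝ) := by
    have h1 := exNum_homImages_le hr hNE hm1 (𝓕 := 𝓕)
    rw [← htstar, ← hs] at h1
    have h2 : (m : ℝ) ^ r ≤ (r.factorial : ℝ) * (1 + ε / 2) * (m.choose r : ℝ) := by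
      rw [div_lt_iff₀ hCmr] at hmb
      linarith
    have h3 : (tstar : ℝ) * (r.factorial : ℝ)
        ≤ s * ((r.factorial : ℝ) * (1 + ε / 2) * (m.choose r : ℝ)) := by
      calc (tstar : ℝ) * (r.factorial : ℝ) ≤ s * (m : ℝ) ^ r := h1
        _ ≤ s * ((r.factorial : ℝ) * (1 + ε / 2) * (m.choose r : ℝ)) :=
            mul_le_mul_of_nonneg_left h2 hs0
    have h4 : (tstar : ℝ) ≤ s * (1 + ε / 2) * (m.choose r : ℝ) := by
      apply le_of_mul_le_mul_right _ hfacpos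
      calc (tstar : ℝ) * (r.factorial : ℝ)
          ≤ s * ((r.factorial : ℝ) * (1 + ε / 2) * (m.choose r : ℝ)) := h3
        _ = s * (1 + ε / 2) * (m.choose r : ℝ) * (r.factorial : ℝ) := by ring
    calc (tstar : ℝ) ≤ s * (1 + ε / 2) * (m.choose r : ℝ) := h4
      _ = (s + s * (ε / 2)) * (m.choose r : ℝ) := by ring
      _ ≤ (s + ε / 2) * (m.choose r : ℝ) := by
          apply mul_le_mul_of_nonneg_right _ (le_of_lt hCmr)
          nlinarith
  set 𝒲 := (Finset.powersetCard r (Finset.range m)).powerset with h𝒲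
  have hKpos : 0 < 𝒲.card := Finset.card_pos.2 ⟨∅, Finset.empty_mem_powerset _⟩
  have hKR : (0:ℝ) < (𝒲.card : ℝ) := by exact_mod_cast hKpos
  set ε' := (ε / 2) / (𝒲.card : ℝ) with hε'
  have hε'pos : 0 < ε' := by positivity
  -- choose the per-pattern thresholds
  have hper : ∀ E₀ : Finset (Finset ℕ), ∃ N : ℕ,
      ¬ (FinHypergraph.Free (homImages r 𝓕) (mkW m E₀)) →
      ∀ n, N ≤ n → ∀ G : FinHypergraph, G.verts = Finset.range n → G.Free 𝓕 →
      ¬ (ε' * ((n.choose m : ℕ) : ℝ) ≤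
        (((Finset.powersetCard m (Finset.range n)).filter
          (fun T => (G.edges.filter (fun e => e ⊆ T)).image (Finset.image (rk T))
            = E₀)).card : ℝ)) := by
    intro E₀
    by_cases hbad : FinHypergraph.Free (homImages r 𝓕) (mkW m E₀)
    · exact ⟨0, fun hcon => absurd hbad hcon⟩
    · obtain ⟨N, hN⟩ := perE_lemma hr h𝓕 hNE hrm hε'pos E₀ hbad
      exact ⟨N, fun _ => hN⟩
  choose Nf hNf using hper
  set n := max (𝒲.sup Nf) m with hn
  have hmn : m ≤ n := le_max_right _ _
  have hrn : r ≤ n := le_trans hrm hmn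
  have hCnr : (0:ℝ) < (n.choose r : ℝ) := by exact_mod_cast Nat.choose_pos hrn
  have hCnm : (0:ℝ) < (n.choose m : ℝ) := by exact_mod_cast Nat.choose_pos hmn
  refine ⟨n, hrn, ?_⟩
  suffices hfin : (exNum r n 𝓕 : ℝ) ≤ (s + ε) * (n.choose r : ℝ) by
    unfold aseq
    rw [div_le_iff₀ hCnr]
    exact hfin
  by_contra hcon
  push_neg at hcon
  obtain ⟨G, hGv, hGu, hGfree, hGc⟩ := exNum_spec (r := r) (n := n) hNE
  rw [← hGc] at hcon
  -- double counting
  have hsum := sum_induced_edges hGv hGu hrm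
  set BAD := (Finset.powersetCard m (Finset.range n)).filter
    (fun T => tstar + 1 ≤ (G.edges.filter (fun e => e ⊆ T)).card) with hBADdef
  have hsplit : G.edges.card * (n - r).choose (m - r)
      ≤ BAD.card * m.choose r + n.choose m * tstar := by
    rw [← hsum]
    have hTbound : ∀ T ∈ Finset.powersetCard m (Finset.range n),
        (G.edges.filter (fun e => e ⊆ T)).card ≤ m.choose r := by
      intro T hT
      obtain ⟨_, hTc⟩ := Finset.mem_powersetCard.1 hT
      have hsub : G.edges.filter (fun e => e ⊆ T) ⊆ Finset.powersetCard r T := by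
        intro e he
        obtain ⟨he1, he2⟩ := Finset.mem_filter.1 he
        exact Finset.mem_powersetCard.2 ⟨he2, hGu e he1⟩
      calc (G.edges.filter (fun e => e ⊆ T)).card ≤ (Finset.powersetCard r T).card :=
            Finset.card_le_card hsub
        _ = m.choose r := by rw [Finset.card_powersetCard, hTc]
    have hsum2 : ∑ T ∈ Finset.powersetCard m (Finset.range n),
        (G.edges.filter (fun e => e ⊆ T)).card
        = ∑ T ∈ BAD, (G.edges.filter (fun e => e ⊆ T)).card
          + ∑ T ∈ (Finset.powersetCard m (Finset.range n)).filter
             (fun T => ¬ (tstar + 1 ≤ (G.edges.filter (fun e => e ⊆ T)).card)),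
            (G.edges.filter (fun e => e ⊆ T)).card := by
      rw [hBADdef]
      exact (Finset.sum_filter_add_sum_filter_not _ _ _).symm
    rw [hsum2]
    have hb1 : ∑ T ∈ BAD, (G.edges.filter (fun e => e ⊆ T)).card
        ≤ BAD.card * m.choose r := by
      apply Finset.sum_le_card_nsmul
      intro T hT
      exact hTbound T (Finset.mem_filter.1 hT).1
    have hb2 : ∑ T ∈ (Finset.powersetCard m (Finset.range n)).filter
        (fun T => ¬ (tstar + 1 ≤ (G.edges.filter (fun e => e ⊆ T)).card)),
        (G.edges.filter (fun e => e ⊆ T)).card ≤ n.choose m * tstar := by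
      calc _ ≤ ((Finset.powersetCard m (Finset.range n)).filter
            (fun T => ¬ (tstar + 1 ≤ (G.edges.filter (fun e => e ⊆ T)).card))).card
            * tstar := by
            apply Finset.sum_le_card_nsmul
            intro T hT
            have := (Finset.mem_filter.1 hT).2
            omega
        _ ≤ (Finset.powersetCard m (Finset.range n)).card * tstar :=
            Nat.mul_le_mul_right _ (Finset.card_le_card (Finset.filter_subset _ _))
        _ = n.choose m * tstar := by
            rw [Finset.card_powersetCard, Finset.card_range]
    omega
  -- real consequence
  have hident : n.choose r * (n - r).choose (m - r) = n.choose m * m.choose r :=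
    (Nat.choose_mul hrm).symm
  have hBADbig : (ε / 2) * (n.choose m : ℝ) ≤ (BAD.card : ℝ) := by
    have hCmrR : (0:ℝ) < (m.choose r : ℝ) := hCmr
    apply le_of_mul_le_mul_right _ hCmrR
    have hD2 : (0:ℝ) ≤ ((n-r).choose (m-r) : ℝ) := by positivity
    have h1 : (s + ε) * ((n.choose m : ℝ) * (m.choose r : ℝ))
        < (G.edges.card : ℝ) * ((n - r).choose (m - r) : ℝ) := by
      have hcast : ((n.choose m : ℝ) * (m.choose r : ℝ))
          = (n.choose r : ℝ) * ((n - r).choose (m - r) : ℝ) := by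
        rw [← Nat.cast_mul, ← Nat.cast_mul, hident]
      rw [hcast]
      have hDpos : (0:ℝ) < ((n - r).choose (m - r) : ℝ) := by
        have : 0 < (n-r).choose (m-r) := Nat.choose_pos (by omega)
        exact_mod_cast this
      calc (s + ε) * ((n.choose r : ℝ) * ((n - r).choose (m - r) : ℝ))
          = ((s + ε) * (n.choose r : ℝ)) * ((n - r).choose (m - r) : ℝ) := by ring
        _ < (G.edges.card : ℝ) * ((n - r).choose (m - r) : ℝ) := by
            apply mul_lt_mul_of_pos_right hcon hDpos
    have h2 : (G.edges.card : ℝ) * ((n - r).choose (m - r) : ℝ)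
        ≤ (BAD.card : ℝ) * (m.choose r : ℝ) + (n.choose m : ℝ) * (tstar : ℝ) := by
      have := hsplit
      have hc : ((G.edges.card * (n - r).choose (m - r) : ℕ) : ℝ)
          ≤ ((BAD.card * m.choose r + n.choose m * tstar : ℕ) : ℝ) := by exact_mod_cast this
      push_cast at hc
      linarith
    have h3 : (n.choose m : ℝ) * (tstar : ℝ)
        ≤ (n.choose m : ℝ) * ((s + ε / 2) * (m.choose r : ℝ)) :=
      mul_le_mul_of_nonneg_left htb (by positivity)
    nlinarith
  -- pigeonhole over patterns
  set edmap : Finset ℕ → Finset (Finset ℕ) :=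
    fun T => (G.edges.filter (fun e => e ⊆ T)).image (Finset.image (rk T)) with hedmap
  have hmapsto : ∀ T ∈ BAD, edmap T ∈ 𝒲 := by
    intro T hT
    have hT1 := (Finset.mem_filter.1 hT).1
    obtain ⟨hTa, hTb⟩ := Finset.mem_powersetCard.1 hT1
    apply Finset.mem_powerset.2
    intro e' he'
    obtain ⟨e, he, rfl⟩ := Finset.mem_image.1 he'
    obtain ⟨he1, he2⟩ := Finset.mem_filter.1 he
    apply Finset.mem_powersetCard.2
    constructor
    · intro y hy
      obtain ⟨z, hz, rfl⟩ := Finset.mem_image.1 hy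
      rw [Finset.mem_range, ← hTb]
      exact rk_lt (he2 hz)
    · rw [Finset.card_image_of_injOn (rk_injOn.mono ?_), hGu e he1]
      exact_mod_cast he2
  obtain ⟨E₀, hE₀mem, hE₀max⟩ := Finset.exists_max_image 𝒲
    (fun E₀ => (BAD.filter (fun T => edmap T = E₀)).card)
    ⟨∅, Finset.empty_mem_powerset _⟩
  have hfibsum : BAD.card = ∑ E₀ ∈ 𝒲, (BAD.filter (fun T => edmap T = E₀)).card :=
    Finset.card_eq_sum_card_fiberwise hmapsto
  have hfibbig : ε' * (n.choose m : ℝ)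
      ≤ ((BAD.filter (fun T => edmap T = E₀)).card : ℝ) := by
    have h1 : BAD.card ≤ 𝒲.card * (BAD.filter (fun T => edmap T = E₀)).card := by
      rw [hfibsum]
      calc ∑ E₁ ∈ 𝒲, (BAD.filter (fun T => edmap T = E₁)).card
          ≤ ∑ _E₁ ∈ 𝒲, (BAD.filter (fun T => edmap T = E₀)).card :=
            Finset.sum_le_sum (fun E₁ hE₁ => hE₀max E₁ hE₁)
        _ = 𝒲.card * (BAD.filter (fun T => edmap T = E₀)).card := by
            rw [Finset.sum_const, smul_eq_mul]
    have h2 : (BAD.card : ℝ) ≤ (𝒲.card : ℝ) * ((BAD.filter (fun T => edmap T = E₀)).card : ℝ) := by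
      exact_mod_cast h1
    rw [hε']
    rw [div_mul_eq_mul_div, div_le_iff₀ hKR]
    calc ε / 2 * (n.choose m : ℝ) ≤ (BAD.card : ℝ) := hBADbig
      _ ≤ (𝒲.card : ℝ) * ((BAD.filter (fun T => edmap T = E₀)).card : ℝ) := h2
      _ = ((BAD.filter (fun T => edmap T = E₀)).card : ℝ) * (𝒲.card : ℝ) := by ring
  -- E₀ is a bad pattern
  have hfibne : (BAD.filter (fun T => edmap T = E₀)).Nonempty := by
    rw [← Finset.card_pos]
    by_contra hcon2
    push_neg at hcon2
    have : (BAD.filter (fun T => edmap T = E₀)).card = 0 := by omega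
    rw [this] at hfibbig
    simp only [Nat.cast_zero] at hfibbig
    nlinarith
  obtain ⟨T₁, hT₁⟩ := hfibne
  obtain ⟨hT₁BAD, hT₁E⟩ := Finset.mem_filter.1 hT₁
  obtain ⟨hT₁pc, hT₁big⟩ := Finset.mem_filter.1 hT₁BAD
  have hbadE₀ : ¬ (FinHypergraph.Free (homImages r 𝓕) (mkW m E₀)) := by
    intro hfree
    have hEsub : E₀ ⊆ Finset.powersetCard r (Finset.range m) :=
      Finset.mem_powerset.1 (hT₁E ▸ hmapsto T₁ hT₁BAD)
    have hWedges : (mkW m E₀).edges = E₀ := by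
      apply Finset.filter_true_of_mem
      intro e he
      exact (Finset.mem_powersetCard.1 (hEsub he)).1
    have hWu : (mkW m E₀).IsUniform r := by
      intro e he
      rw [mkW] at he
      have := (Finset.mem_filter.1 he).1
      exact (Finset.mem_powersetCard.1 (hEsub this)).2
    have hle := card_le_exNum (H := mkW m E₀) rfl hWu hfree
    rw [hWedges] at hle
    -- but E₀.card is large
    have hE₀card : E₀.card = (G.edges.filter (fun e => e ⊆ T₁)).card := by
      rw [← hT₁E, hedmap]
      exact relabel_card (G := G) (φ := rk T₁) unrk_rk
    rw [← htstar] at hle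
    omega
  -- contradiction via the per-pattern lemma
  have hNle : Nf E₀ ≤ n := le_trans (Finset.le_sup hE₀mem) (le_max_left _ _)
  apply hNf E₀ hbadE₀ n hNle G hGv hGfree
  calc ε' * ((n.choose m : ℕ) : ℝ)
      ≤ ((BAD.filter (fun T => edmap T = E₀)).card : ℝ) := hfibbig
    _ ≤ _ := by
        apply Nat.cast_le.2
        apply Finset.card_le_card
        intro T hT
        obtain ⟨h1, h2⟩ := Finset.mem_filter.1 hT
        exact Finset.mem_filter.2 ⟨(Finset.mem_filter.1 h1).1, h2⟩

theorem piLim_le_tsup {r : ℕ} {𝓕 : Set FinHypergraph} (hr : 2 ≤ r)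
    (h𝓕 : ∀ F ∈ 𝓕, F.IsUniform r) (hNE : ∀ F ∈ 𝓕, F.edges.Nonempty) :
    piLim r 𝓕 ≤ sSup (TSupSet r 𝓕) := by
  apply le_of_forall_pos_le_add
  intro ε hε
  obtain ⟨n, hn, hle⟩ := aseq_eventually_le hr h𝓕 hNE hε
  exact le_trans (piLim_le_aseq hn) hle
/-! ### Degenerate cases and the main theorem -/

theorem main_nondegenerate {r : ℕ} {𝓕 : Set FinHypergraph} (hr : 2 ≤ r)
    (h𝓕 : ∀ F ∈ 𝓕, F.IsUniform r) (hNE : ∀ F ∈ 𝓕, F.edges.Nonempty) :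
    Filter.Tendsto (aseq r 𝓕) Filter.atTop (nhds (sSup (TSupSet r 𝓕))) := by
  have heq : piLim r 𝓕 = sSup (TSupSet r 𝓕) :=
    le_antisymm (piLim_le_tsup hr h𝓕 hNE) (tsup_le_piLim hr hNE)
  rw [← heq]
  exact aseq_tendsto hNE

theorem main_degenerate1 {r : ℕ} {𝓕 : Set FinHypergraph} (hr : 2 ≤ r)
    (h𝓕 : ∀ F ∈ 𝓕, F.IsUniform r) {F₀ : FinHypergraph} (hF₀ : F₀ ∈ 𝓕)
    (hverts : F₀.verts = ∅) :
    Filter.Tendsto (aseq r 𝓕) Filter.atTop (nhds (sSup (TSupSet r 𝓕))) := by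
  have hedges : F₀.edges = ∅ := by
    rw [Finset.eq_empty_iff_forall_notMem]
    intro e he
    have h1 := F₀.edge_sub e he
    rw [hverts, Finset.subset_empty] at h1
    have h2 := h𝓕 F₀ hF₀ e he
    rw [h1] at h2
    simp at h2
    omega
  have hcopy : ∀ H : FinHypergraph, F₀.ContainsCopy H := by
    intro H
    refine ⟨id, ?_, ?_, ?_⟩
    · rw [hverts]; simp
    · intro v hv; rw [hverts] at hv; simp at hv
    · intro e he; rw [hedges] at he; simp at he
  have hsup : TSupSet r 𝓕 = ∅ := by
    rw [Set.eq_empty_iff_forall_notMem]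
    rintro b ⟨H, _, hhf, _⟩
    apply hhf F₀ hF₀ id
    constructor
    · intro v hv; rw [hverts] at hv; simp at hv
    · intro e he; rw [hedges] at he; simp at he
  have hex : ∀ n, exNum r n 𝓕 = 0 := by
    intro n
    rw [exNum_def]
    have : exSet r n 𝓕 = ∅ := by
      rw [Set.eq_empty_iff_forall_notMem]
      rintro mm ⟨H, _, _, hfree, _⟩
      exact hfree F₀ hF₀ (hcopy H)
    rw [this, csSup_empty]
    rfl
  rw [hsup, Real.sSup_empty]
  have : aseq r 𝓕 = fun _ => (0 : ℝ) := by
    funext n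
    rw [aseq, hex n, Nat.cast_zero, zero_div]
  rw [this]
  exact tendsto_const_nhds

theorem main_degenerate2 {r : ℕ} {𝓕 : Set FinHypergraph} (hr : 2 ≤ r)
    (h𝓕 : ∀ F ∈ 𝓕, F.IsUniform r) {F₀ : FinHypergraph} (hF₀ : F₀ ∈ 𝓕)
    (hedges : F₀.edges = ∅) (hall : ∀ F ∈ 𝓕, F.verts.Nonempty) :
    Filter.Tendsto (aseq r 𝓕) Filter.atTop (nhds (sSup (TSupSet r 𝓕))) := by
  have hsup : TSupSet r 𝓕 = {0} := by
    ext b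
    constructor
    · rintro ⟨H, hu, hhf, rfl⟩
      have hHv : H.verts = ∅ := by
        rw [Finset.eq_empty_iff_forall_notMem]
        intro y hy
        apply hhf F₀ hF₀ (fun _ => y)
        constructor
        · intro v _; exact hy
        · intro e he; rw [hedges] at he; simp at he
      have hlag : lagrangian H = 0 := by
        have : LagSet H = ∅ := by
          rw [Set.eq_empty_iff_forall_notMem]
          rintro x ⟨w, _, hsum, _⟩
          rw [hHv, Finset.sum_empty] at hsum
          exact one_ne_zero hsum.symm
        rw [lagrangian_def, this, Real.sSup_empty]
      rw [Set.mem_singleton_iff, blowupDensity, hlag, mul_zero]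
    · rw [Set.mem_singleton_iff]
      rintro rfl
      refine ⟨emptyHG 0, by simp [emptyHG, FinHypergraph.IsUniform], ?_, ?_⟩
      · intro F hF f hf
        obtain ⟨v, hv⟩ := hall F hF
        have := hf.1 v hv
        simp [emptyHG] at this
      · have h1 : LagSet (emptyHG 0) = ∅ := by
          rw [Set.eq_empty_iff_forall_notMem]
          rintro x ⟨w, _, hsum, _⟩
          rw [emptyHG] at hsum
          simp at hsum
        rw [blowupDensity, lagrangian_def, h1, Real.sSup_empty, mul_zero]
  rw [hsup, csSup_singleton]
  -- eventually exNum is zero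
  have hex : ∀ n, F₀.verts.card ≤ n → exNum r n 𝓕 = 0 := by
    intro n hn
    rw [exNum_def]
    have : exSet r n 𝓕 = ∅ := by
      rw [Set.eq_empty_iff_forall_notMem]
      rintro mm ⟨H, hHv, _, hfree, _⟩
      apply hfree F₀ hF₀
      obtain ⟨f, hfinj, hfmem⟩ := exists_injOn_of_card_le
        (show F₀.verts.card ≤ (Finset.range n).card by rwa [Finset.card_range])
      refine ⟨f, hfinj, ?_, ?_⟩
      · intro v hv; rw [hHv]; exact hfmem v hv
      · intro e he; rw [hedges] at he; simp at he
    rw [this, csSup_empty]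
    rfl
  have hc : Filter.Tendsto (fun _ : ℕ => (0:ℝ)) Filter.atTop (nhds 0) := tendsto_const_nhds
  apply Filter.Tendsto.congr' _ hc
  filter_upwards [Filter.eventually_ge_atTop F₀.verts.card] with n hn
  rw [aseq, hex n hn, Nat.cast_zero, zero_div]

theorem final_theorem (r : ℕ) (hr : 2 ≤ r)
    (𝓕 : Set FinHypergraph) (h𝓕 : ∀ F ∈ 𝓕, F.IsUniform r) :
    Filter.Tendsto (fun n : ℕ => (exNum r n 𝓕 : ℝ) / (n.choose r : ℝ)) Filter.atTop
      (nhds (sSup {b : ℝ | ∃ H : FinHypergraph, H.IsUniform r ∧ H.HomFree 𝓕 ∧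
        b = blowupDensity r H})) := by
  show Filter.Tendsto (aseq r 𝓕) Filter.atTop (nhds (sSup (TSupSet r 𝓕)))
  by_cases hNE : ∀ F ∈ 𝓕, F.edges.Nonempty
  · exact main_nondegenerate hr h𝓕 hNE
  · push_neg at hNE
    obtain ⟨F₀, hF₀, hF₀e⟩ := hNE
    by_cases hall : ∀ F ∈ 𝓕, F.verts.Nonempty
    · exact main_degenerate2 hr h𝓕 hF₀ hF₀e hall
    · push_neg at hall
      obtain ⟨F₁, hF₁, hF₁v⟩ := hall
      exact main_degenerate1 hr h𝓕 hF₁ hF₁v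

/-- **Lemma 2.6.** For every `r ≥ 2` and every family `𝓕` of `r`-uniform hypergraphs,
the Turán density `π(𝓕)` equals `sup { b(H) : H is an 𝓕-hom-free r-uniform hypergraph }`:
the sequence `ex(n, 𝓕) / (n choose r)` tends to this supremum. -/
theorem turan_density_eq_sup_blowupDensity (r : ℕ) (hr : 2 ≤ r)
    (𝓕 : Set FinHypergraph) (h𝓕 : ∀ F ∈ 𝓕, F.IsUniform r) :
    Filter.Tendsto (fun n : ℕ => (exNum r n 𝓕 : ℝ) / (n.choose r : ℝ)) Filter.atTop
      (nhds (sSup {b : ℝ | ∃ H : FinHypergraph, H.IsUniform r ∧ H.HomFree 𝓕 ∧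
        b = blowupDensity r H})) := by
  exact final_theorem r hr 𝓕 h𝓕
end
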